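/- arXiv:1708.01777 — 4 statements merged into one kernel-verified Lean document; each statement's English description precedes it below -/
import Mathlib

section
/- Let D be a digraph, let W2 be the 2-wheel with centre c and rim consisting of vertices a, b (i.e., W2 consists of the directed 2-cycle ab, ba together with arcs ca and cb), and let b', c' be vertices of D. Let S be the strong component of b' in D - c'. Then D contains a W2-subdivision with b-vertex b' and c-vertex c' if and only if there exist distinct vertices x1, x2 in V(S) such that there are two independent (c', {x1, x2})-dipaths in D - (V(S) \ {x1, x2}) and two independent ({x1, x2}, b')-dipaths in S. -/
open List

variable {V : Type*}

/-- The interior (internal vertices) of a path given as a list of vertices. -/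
def interiorL (l : List V) : List V := l.tail.dropLast

/-- `l` is a directed path (dipath) in the digraph `D`. -/
def IsDipath (D : V → V → Prop) (l : List V) : Prop :=
  l ≠ [] ∧ l.Chain' D ∧ l.Nodup

/-- `l` is a dipath from `x` to `y` in `D`. -/
def DipathFromTo (D : V → V → Prop) (l : List V) (x y : V) : Prop :=
  IsDipath D l ∧ l.head? = some x ∧ l.getLast? = some y

/-- `l` is a directed cycle in `D` (length at least 2, digraphs being strict). -/
def IsDicycle (D : V → V → Prop) (l : List V) : Prop :=
  2 ≤ l.length ∧ l.Nodup ∧ l.Chain' D ∧ ∃ a ∈ l.getLast?, ∃ b ∈ l.head?, D a b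

/-- The restriction (induced subdigraph) of `D` to the vertex set `A`. -/
def restrict (D : V → V → Prop) (A : Set V) : V → V → Prop :=
  fun u v => D u v ∧ u ∈ A ∧ v ∈ A

/-- Reachability by a dipath inside the vertex set `A`. -/
def ReachIn (D : V → V → Prop) (A : Set V) : V → V → Prop :=
  Relation.ReflTransGen (restrict D A)

/-- Reachability by a dipath. -/
def Reach (D : V → V → Prop) : V → V → Prop := Relation.ReflTransGen D

/-- `x` appears strictly before `y` along the list `l`. -/
def Before (l : List V) (x y : V) : Prop :=
  ∃ i j : ℕ, i < j ∧ l[i]? = some x ∧ l[j]? = some y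

/-- `x` and `y` are consecutive (in this order) in `l`. -/
def ConsecIn (l : List V) (x y : V) : Prop :=
  ∃ i : ℕ, l[i]? = some x ∧ l[i + 1]? = some y

/-- `D` contains a subdivision of `F`, realized by the branch-vertex map `branch` and,
for every arc `uv` of `F`, the dipath `P u v` from `branch u` to `branch v`;
the paths have length at least one and are internally disjoint from each other
and from the branch vertices. -/
def IsSubdivisionIn {W : Type*} (F : W → W → Prop) (D : V → V → Prop)
    (branch : W → V) (P : W → W → List V) : Prop :=
  Function.Injective branch ∧
  (∀ u v : W, F u v →
    DipathFromTo D (P u v) (branch u) (branch v) ∧ 2 ≤ (P u v).length) ∧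
  (∀ u v : W, F u v → ∀ x ∈ interiorL (P u v), ∀ w : W, x ≠ branch w) ∧
  (∀ u v u' v' : W, F u v → F u' v' → (u, v) ≠ (u', v') →
    ∀ x ∈ interiorL (P u v), x ∉ interiorL (P u' v'))

/-- `D` contains a subdivision of `F`. -/
def ContainsSubdivision {W : Type*} (F : W → W → Prop) (D : V → V → Prop) : Prop :=
  ∃ (branch : W → V) (P : W → W → List V), IsSubdivisionIn F D branch P

/-- The 2-wheel `W₂` with rim `a = 0`, `b = 1` and centre `c = 2`:
arcs `ab`, `ba`, `ca`, `cb`. -/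
def W2 : Fin 3 → Fin 3 → Prop := fun u v =>
  (u, v) ∈ ([(0, 1), (1, 0), (2, 0), (2, 1)] : List (Fin 3 × Fin 3))

/-- The strong component of `b'` in `D - c'`. -/
def SComp (D : V → V → Prop) (b' c' : V) : Set V :=
  {v | ReachIn D {x | x ≠ c'} b' v ∧ ReachIn D {x | x ≠ c'} v b'}

section WTool
set_option linter.unusedSectionVars false

variable [DecidableEq V]

lemma mem_of_head?_eq {l : List V} {x : V} (h : l.head? = some x) : x ∈ l :=
  List.mem_of_mem_head? (by rw [h]; rfl)

lemma mem_of_getLast?_eq {l : List V} {x : V} (h : l.getLast? = some x) : x ∈ l := by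
  cases l with
  | nil => simp at h
  | cons a t =>
    rw [List.getLast?_eq_getLast (List.cons_ne_nil a t)] at h
    obtain rfl : (a :: t).getLast (by simp) = x := by injection h
    exact List.getLast_mem _

lemma chain'_restrict {D : V → V → Prop} {A : Set V} {l : List V}
    (hc : l.Chain' D) (hA : ∀ z ∈ l, z ∈ A) : l.Chain' (restrict D A) := by
  induction l with
  | nil => exact List.isChain_nil
  | cons a t ih =>
    unfold List.Chain' at hc ⊢
    rw [List.isChain_cons] at hc ⊢
    refine ⟨fun y hy => ⟨hc.1 y hy, hA a (by simp),
      hA y (List.mem_cons_of_mem _ (List.mem_of_mem_head? hy))⟩,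
      ih hc.2 fun z hz => hA z (List.mem_cons_of_mem _ hz)⟩

lemma chain'_of_restrict {D : V → V → Prop} {A : Set V} {l : List V}
    (hc : l.Chain' (restrict D A)) : l.Chain' D :=
  hc.imp fun _ _ h => h.1

lemma dipath_restrict {D : V → V → Prop} {A : Set V} {l : List V} {x y : V}
    (h : DipathFromTo D l x y) (hA : ∀ z ∈ l, z ∈ A) :
    DipathFromTo (restrict D A) l x y :=
  ⟨⟨h.1.1, chain'_restrict h.1.2.1 hA, h.1.2.2⟩, h.2⟩

lemma dipath_of_restrict {D : V → V → Prop} {A : Set V} {l : List V} {x y : V}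
    (h : DipathFromTo (restrict D A) l x y) : DipathFromTo D l x y :=
  ⟨⟨h.1.1, chain'_of_restrict h.1.2.1, h.1.2.2⟩, h.2⟩

lemma mem_set_of_chain'_restrict {D : V → V → Prop} {A : Set V} {l : List V}
    (hc : l.Chain' (restrict D A)) (hlen : 2 ≤ l.length) : ∀ z ∈ l, z ∈ A := by
  induction l with
  | nil => simp
  | cons a t ih =>
    cases t with
    | nil => simp at hlen
    | cons b t' =>
      unfold List.Chain' at hc
      rw [List.isChain_cons_cons] at hc
      intro z hz
      rcases List.mem_cons.1 hz with rfl | hz'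
      · exact hc.1.2.1
      cases t' with
      | nil => rcases List.mem_singleton.1 hz' with rfl; exact hc.1.2.2
      | cons c t'' => exact ih hc.2 (by simp) z hz'

lemma mem_set_of_dipath_restrict {D : V → V → Prop} {A : Set V} {l : List V} {x y : V}
    (h : DipathFromTo (restrict D A) l x y) (hxy : x ≠ y) : ∀ z ∈ l, z ∈ A := by
  obtain ⟨⟨hne, hc, hnd⟩, hh, hl⟩ := h
  refine mem_set_of_chain'_restrict hc ?_
  cases l with
  | nil => simp at hh
  | cons a t =>
    cases t with
    | nil =>
      exfalso
      simp at hh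
      rw [List.getLast?_eq_getLast (List.cons_ne_nil _ _)] at hl
      simp at hl
      exact hxy (hh ▸ hl ▸ rfl)
    | cons b t' => simp

def prefixTo (v : V) (l : List V) : List V := l.takeWhile (fun x => x ≠ v) ++ [v]
def suffixFrom (v : V) (l : List V) : List V := l.dropWhile (fun x => x ≠ v)

lemma head?_suffixFrom {v : V} {l : List V} (h : v ∈ l) : (suffixFrom v l).head? = some v := by
  induction l with
  | nil => simp at h
  | cons a t ih =>
    by_cases hav : a = v
    · subst hav; simp [suffixFrom, List.dropWhile_cons]
    · rcases List.mem_cons.1 h with rfl | ht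
      · exact absurd rfl hav
      · simpa [suffixFrom, List.dropWhile_cons, hav] using ih ht

lemma suffixFrom_suffix (v : V) (l : List V) : suffixFrom v l <:+ l :=
  List.dropWhile_suffix _

lemma prefixTo_append_tail {v : V} {l : List V} (h : v ∈ l) :
    prefixTo v l ++ (suffixFrom v l).tail = l := by
  have h1 : suffixFrom v l = v :: (suffixFrom v l).tail :=
    (List.cons_head?_tail (by rw [head?_suffixFrom h]; rfl)).symm
  have h2 := List.takeWhile_append_dropWhile (p := fun x => decide (x ≠ v)) (l := l)
  calc prefixTo v l ++ (suffixFrom v l).tail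
      = l.takeWhile (fun x => x ≠ v) ++ (v :: (suffixFrom v l).tail) := by
        simp [prefixTo]
    _ = l.takeWhile (fun x => x ≠ v) ++ suffixFrom v l := by rw [← h1]
    _ = l := h2

lemma prefixTo_prefix {v : V} {l : List V} (h : v ∈ l) : prefixTo v l <+: l :=
  ⟨(suffixFrom v l).tail, prefixTo_append_tail h⟩

lemma mem_of_mem_prefixTo {v z : V} {l : List V} (h : v ∈ l) (hz : z ∈ prefixTo v l) : z ∈ l :=
  (prefixTo_prefix h).subset hz

lemma mem_of_mem_suffixFrom {v z : V} {l : List V} (hz : z ∈ suffixFrom v l) : z ∈ l :=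
  (suffixFrom_suffix v l).subset hz

lemma getLast?_prefixTo (v : V) (l : List V) : (prefixTo v l).getLast? = some v :=
  List.getLast?_concat

lemma head?_prefixTo {v : V} {l : List V} (hl : l ≠ []) : (prefixTo v l).head? = l.head? := by
  cases l with
  | nil => simp at hl
  | cons a t =>
    by_cases hav : a = v
    · subst hav; simp [prefixTo, List.takeWhile_cons]
    · simp [prefixTo, List.takeWhile_cons, hav]

lemma getLast?_suffixFrom {v : V} {l : List V} (h : v ∈ l) :
    (suffixFrom v l).getLast? = l.getLast? := by
  obtain ⟨u, hu⟩ := suffixFrom_suffix v l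
  have hne : suffixFrom v l ≠ [] := by
    intro hnil
    have hv' := head?_suffixFrom h
    rw [hnil] at hv'; simp at hv'
  conv_rhs => rw [← hu]
  rw [List.getLast?_append]
  cases hsl : (suffixFrom v l).getLast? with
  | none => exact absurd (List.getLast?_eq_none_iff.1 hsl) hne
  | some w => simp

lemma mem_prefixTo_self (v : V) (l : List V) : v ∈ prefixTo v l := by simp [prefixTo]

lemma mem_suffixFrom_self {v : V} {l : List V} (h : v ∈ l) : v ∈ suffixFrom v l :=
  List.mem_of_mem_head? (by rw [head?_suffixFrom h]; rfl)

lemma eq_of_mem_prefixTo_of_mem_suffixFrom {v z : V} {l : List V} (hnd : l.Nodup)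
    (h : v ∈ l) (h1 : z ∈ prefixTo v l) (h2 : z ∈ suffixFrom v l) : z = v := by
  have hsplit := prefixTo_append_tail h
  have hnd' : (prefixTo v l ++ (suffixFrom v l).tail).Nodup := by rw [hsplit]; exact hnd
  rw [List.nodup_append] at hnd'
  have h1' : suffixFrom v l = v :: (suffixFrom v l).tail :=
    (List.cons_head?_tail (by rw [head?_suffixFrom h]; rfl)).symm
  rw [h1'] at h2
  rcases List.mem_cons.1 h2 with rfl | h2'
  · rfl
  · exact absurd rfl (hnd'.2.2 _ h1 _ h2')

lemma dipathFromTo_prefixTo {D : V → V → Prop} {l : List V} {x y v : V}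
    (h : DipathFromTo D l x y) (hv : v ∈ l) : DipathFromTo D (prefixTo v l) x v :=
  ⟨⟨by simp [prefixTo], h.1.2.1.prefix (prefixTo_prefix hv),
    (h.1.2.2).sublist (prefixTo_prefix hv).sublist⟩,
   by rw [head?_prefixTo h.1.1, h.2.1], getLast?_prefixTo v l⟩

lemma dipathFromTo_suffixFrom {D : V → V → Prop} {l : List V} {x y v : V}
    (h : DipathFromTo D l x y) (hv : v ∈ l) : DipathFromTo D (suffixFrom v l) v y := by
  refine ⟨⟨?_, h.1.2.1.suffix (suffixFrom_suffix v l),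
    (h.1.2.2).sublist (suffixFrom_suffix v l).sublist⟩,
   head?_suffixFrom hv, by rw [getLast?_suffixFrom hv, h.2.2]⟩
  intro hnil
  have := head?_suffixFrom hv; rw [hnil] at this; simp at this

lemma not_p_of_mem_takeWhile_find? {p : V → Bool} {a z : V} {l : List V}
    (h : l.find? p = some a) (hz : z ∈ l.takeWhile (fun x => x ≠ a)) : ¬ p z := by
  induction l with
  | nil => simp at h
  | cons b t ih =>
    by_cases hb : p b
    · rw [List.find?_cons_of_pos hb] at h
      obtain rfl : b = a := by injection h
      simp [List.takeWhile_cons] at hz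
    · rw [List.find?_cons_of_neg (by simpa using hb)] at h
      have hba : b ≠ a := by
        rintro rfl
        exact hb (by simpa using List.find?_some h)
      rw [List.takeWhile_cons, if_pos (by simpa using hba)] at hz
      rcases List.mem_cons.1 hz with rfl | hz'
      · simpa using hb
      · exact ih h hz'

lemma mem_of_mem_interiorL {l : List V} {z : V} (h : z ∈ interiorL l) : z ∈ l :=
  (List.dropLast_sublist _).subset h |> fun h' => (List.tail_sublist l).subset h'

lemma ne_head_of_mem_interiorL {l : List V} {x z : V} (hnd : l.Nodup)
    (hh : l.head? = some x) (hz : z ∈ interiorL l) : z ≠ x := by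
  cases l with
  | nil => simp at hh
  | cons a t =>
    obtain rfl : a = x := by injection hh
    rintro rfl
    exact (List.nodup_cons.1 hnd).1 ((List.dropLast_sublist _).subset hz)

lemma ne_last_of_mem_interiorL {l : List V} {y z : V} (hnd : l.Nodup)
    (hl : l.getLast? = some y) (hz : z ∈ interiorL l) : z ≠ y := by
  cases l with
  | nil => simp at hl
  | cons a t =>
    cases ht : t with
    | nil => subst ht; simp [interiorL] at hz
    | cons b t' =>
      subst ht
      have htne : (b :: t') ≠ ([] : List V) := by simp
      have hly : (b :: t').getLast htne = y := by
        rw [List.getLast?_cons_cons] at hl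
        rw [List.getLast?_eq_getLast htne] at hl
        injection hl
      rintro rfl
      have hsplit := List.dropLast_append_getLast htne
      have hnd' : (b :: t').Nodup := (List.nodup_cons.1 hnd).2
      rw [← hsplit] at hnd'
      rw [List.nodup_append] at hnd'
      exact hnd'.2.2 _ (by simpa [interiorL] using hz) _ (by simp [hly]) rfl

lemma mem_interiorL_of_ne {l : List V} {x y z : V}
    (hh : l.head? = some x) (hl : l.getLast? = some y) (hz : z ∈ l)
    (hzx : z ≠ x) (hzy : z ≠ y) : z ∈ interiorL l := by
  cases l with
  | nil => simp at hz
  | cons a t =>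
    obtain rfl : a = x := by injection hh
    rcases List.mem_cons.1 hz with rfl | hzt
    · exact absurd rfl hzx
    cases ht : t with
    | nil => subst ht; simp at hzt
    | cons b t' =>
      subst ht
      have htne : (b :: t') ≠ ([] : List V) := by simp
      have hly : (b :: t').getLast htne = y := by
        rw [List.getLast?_cons_cons] at hl
        rw [List.getLast?_eq_getLast htne] at hl
        injection hl
      have hsplit := List.dropLast_append_getLast htne
      rw [← hsplit] at hzt
      rcases List.mem_append.1 hzt with h | h
      · simpa [interiorL] using h
      · rw [hly] at h; exact absurd (List.mem_singleton.1 h) hzy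

lemma interior_facts {D : V → V → Prop} {l : List V} {x y z : V}
    (h : DipathFromTo D l x y) (hz : z ∈ interiorL l) : z ∈ l ∧ z ≠ x ∧ z ≠ y :=
  ⟨mem_of_mem_interiorL hz, ne_head_of_mem_interiorL h.1.2.2 h.2.1 hz,
   ne_last_of_mem_interiorL h.1.2.2 h.2.2 hz⟩

lemma two_le_length_dipath {D : V → V → Prop} {l : List V} {x y : V}
    (h : DipathFromTo D l x y) (hxy : x ≠ y) : 2 ≤ l.length := by
  cases l with
  | nil => exact absurd rfl h.1.1
  | cons a t =>
    cases t with
    | nil =>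
      exfalso
      obtain ⟨_, hh, hl⟩ := h
      simp at hh hl
      exact hxy (hh ▸ hl ▸ rfl)
    | cons b t' => simp

lemma eq_singleton_of_dipath_self {D : V → V → Prop} {l : List V} {x : V}
    (h : DipathFromTo D l x x) : l = [x] := by
  cases l with
  | nil => exact absurd rfl h.1.1
  | cons a t =>
    obtain ⟨⟨_, _, hnd⟩, hh, hl⟩ := h
    obtain rfl : a = x := by injection hh
    cases t with
    | nil => rfl
    | cons b t' =>
      exfalso
      rw [List.getLast?_cons_cons, List.getLast?_eq_getLast (List.cons_ne_nil _ _)] at hl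
      have hmem : (b :: t').getLast (by simp) ∈ b :: t' := List.getLast_mem _
      have hga : (b :: t').getLast (by simp) = a := by injection hl
      rw [hga] at hmem
      exact (List.nodup_cons.1 hnd).1 hmem

lemma dipath_append {r : V → V → Prop} {A B : List V} {x y z : V}
    (hA : DipathFromTo r A x y) (hB : DipathFromTo r B y z)
    (hd : ∀ w ∈ A, w ∈ B → w = y) : DipathFromTo r (A ++ B.tail) x z := by
  obtain ⟨⟨hAne, hAc, hAnd⟩, hAh, hAl⟩ := hA
  obtain ⟨⟨hBne, hBc, hBnd⟩, hBh, hBl⟩ := hB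
  have hBsplit : B = y :: B.tail := (List.cons_head?_tail (by rw [hBh]; rfl)).symm
  have hBc' : B.tail.Chain' r ∧ ∀ w ∈ B.tail.head?, r y w := by
    rw [hBsplit] at hBc
    unfold List.Chain' at hBc
    rw [List.isChain_cons] at hBc
    exact ⟨hBc.2, hBc.1⟩
  have hynB : y ∉ B.tail := by
    have := hBsplit ▸ hBnd
    exact (List.nodup_cons.1 this).1
  refine ⟨⟨by simp [hAne], ?_, ?_⟩, ?_, ?_⟩
  · refine List.IsChain.append hAc hBc'.1 ?_
    intro a ha b hb
    have hay : a = y := by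
      rw [hAl] at ha
      have : y = a := by injection ha
      exact this.symm
    subst hay
    exact hBc'.2 b hb
  · rw [List.nodup_append]
    refine ⟨hAnd, (hBsplit ▸ hBnd).of_cons, ?_⟩
    intro w hwA w' hwB hww
    subst hww
    exact hynB ((hd w hwA (hBsplit ▸ List.mem_cons_of_mem _ hwB)) ▸ hwB)
  · cases A with
    | nil => exact absurd rfl hAne
    | cons a t => simpa using hAh
  · cases hBt : B.tail with
    | nil =>
      simp only [hBt, List.append_nil]
      rw [hAl]
      rw [hBsplit, hBt] at hBl
      simpa using hBl
    | cons b t' =>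
      rw [List.getLast?_append]
      have hBl' : (y :: b :: t').getLast? = some z := by rw [← hBt, ← hBsplit]; exact hBl
      rw [List.getLast?_cons_cons] at hBl'
      rw [hBl']
      rfl

lemma mem_of_mem_append_tail {A B : List V} {z : V} (h : z ∈ A ++ B.tail) :
    z ∈ A ∨ z ∈ B := by
  rcases List.mem_append.1 h with h | h
  · exact Or.inl h
  · exact Or.inr ((List.tail_sublist B).subset h)

lemma reflTransGen_of_dipath {r : V → V → Prop} {l : List V} {x y : V}
    (h : DipathFromTo r l x y) : Relation.ReflTransGen r x y := by
  obtain ⟨⟨hne, hc, _⟩, hh, hl⟩ := h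
  cases l with
  | nil => exact absurd rfl hne
  | cons a t =>
    obtain rfl : a = x := by injection hh
    refine List.relationReflTransGen_of_exists_isChain_cons t ?_ ?_
    · exact hc
    · rw [List.getLast?_eq_getLast (List.cons_ne_nil _ _)] at hl
      injection hl

lemma reachIn_of_dipath {D : V → V → Prop} {A : Set V} {l : List V} {x y : V}
    (h : DipathFromTo D l x y) (hA : ∀ z ∈ l, z ∈ A) : ReachIn D A x y :=
  reflTransGen_of_dipath ⟨⟨h.1.1, chain'_restrict h.1.2.1 hA, h.1.2.2⟩, h.2⟩

lemma exists_dipath_of_reflTransGen {r : V → V → Prop} {x y : V}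
    (h : Relation.ReflTransGen r x y) : ∃ l, DipathFromTo r l x y := by
  induction h using Relation.ReflTransGen.head_induction_on with
  | refl => exact ⟨[y], ⟨by simp, List.isChain_singleton _, by simp⟩, by simp, by simp⟩
  | @head a b hab hby ih =>
    obtain ⟨l, hl⟩ := ih
    by_cases hm : a ∈ l
    · exact ⟨suffixFrom a l, dipathFromTo_suffixFrom hl hm⟩
    · obtain ⟨⟨hne, hc, hnd⟩, hh, hlast⟩ := hl
      refine ⟨a :: l, ⟨by simp, ?_, List.nodup_cons.2 ⟨hm, hnd⟩⟩, by simp, ?_⟩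
      · unfold List.Chain'
        rw [List.isChain_cons]
        refine ⟨fun w hw => ?_, hc⟩
        have : w = b := by rw [hh] at hw; exact (by injection hw : b = w).symm
        rw [this]; exact hab
      · rw [List.getLast?_cons, hlast]
        rfl

lemma reachIn_right_mem {D : V → V → Prop} {A : Set V} {x y : V}
    (h : ReachIn D A x y) : y = x ∨ y ∈ A := by
  rcases h.cases_tail with h1 | ⟨c, _, hc⟩
  · exact Or.inl h1
  · exact Or.inr hc.2.2

lemma sComp_self {D : V → V → Prop} {b' c' : V} : b' ∈ SComp D b' c' :=
  ⟨Relation.ReflTransGen.refl, Relation.ReflTransGen.refl⟩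

lemma sComp_not_centre {D : V → V → Prop} {b' c' : V} (hbc : b' ≠ c') :
    c' ∉ SComp D b' c' := by
  intro hc
  rcases reachIn_right_mem hc.1 with h | h
  · exact hbc h.symm
  · exact h rfl

lemma sComp_reachIn {D : V → V → Prop} {b' c' : V} {u v : V}
    (hu : u ∈ SComp D b' c') (hv : v ∈ SComp D b' c') :
    ReachIn D (SComp D b' c') u v := by
  have key : ∀ w, ReachIn D {x | x ≠ c'} w v → w ∈ SComp D b' c' →
      ReachIn D (SComp D b' c') w v := by
    intro w h
    induction h using Relation.ReflTransGen.head_induction_on with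
    | refl => intro _; exact Relation.ReflTransGen.refl
    | @head a w haw hwv ih =>
      intro haS
      have hwS : w ∈ SComp D b' c' := ⟨haS.1.tail haw, hwv.trans hv.2⟩
      exact Relation.ReflTransGen.head ⟨haw.1, haS, hwS⟩ (ih hwS)
  exact key u (hu.2.trans hv.1) hu

lemma mem_set_of_dipath_restrict' {D : V → V → Prop} {A : Set V} {l : List V} {x y : V}
    (h : DipathFromTo (restrict D A) l x y) (hx : x ∈ A) : ∀ z ∈ l, z ∈ A := by
  by_cases hxy : x = y
  · subst hxy
    have hl := eq_singleton_of_dipath_self (dipath_of_restrict h)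
    rw [hl]
    intro z hz
    rcases List.mem_singleton.1 hz with rfl
    exact hx
  · exact mem_set_of_dipath_restrict h hxy

lemma W2_cases (u v : Fin 3) (h : W2 u v) :
    (u = 0 ∧ v = 1) ∨ (u = 1 ∧ v = 0) ∨ (u = 2 ∧ v = 0) ∨ (u = 2 ∧ v = 1) := by
  revert h; unfold W2; revert u v; decide

lemma W2_01 : W2 0 1 := by unfold W2; decide
lemma W2_10 : W2 1 0 := by unfold W2; decide
lemma W2_20 : W2 2 0 := by unfold W2; decide
lemma W2_21 : W2 2 1 := by unfold W2; decide

end WTool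

section WMain
set_option linter.unusedSectionVars false
variable [DecidableEq V]

lemma fin3_cases (w : Fin 3) : w = 0 ∨ w = 1 ∨ w = 2 := by revert w; decide

lemma aux2 {D : V → V → Prop} {S : Set V} {b' c' x1 x2 y : V} {Q1 Q2 R1 R2 T : List V}
    (hc'S : c' ∉ S) (hx1S : x1 ∈ S) (hx2S : x2 ∈ S)
    (hQ1 : DipathFromTo D Q1 c' x1) (hQ2 : DipathFromTo D Q2 c' x2)
    (hQ1S : ∀ z ∈ Q1, z ∈ S → z = x1) (hQ2S : ∀ z ∈ Q2, z ∈ S → z = x2)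
    (hQQ : ∀ z ∈ Q1, z ∈ Q2 → z = c')
    (hR1 : DipathFromTo D R1 x1 b') (hR2 : DipathFromTo D R2 x2 b')
    (hR1S : ∀ z ∈ R1, z ∈ S) (hR2S : ∀ z ∈ R2, z ∈ S)
    (hRR : ∀ z ∈ R1, z ∈ R2 → z = b')
    (hT : DipathFromTo D T b' y) (hTS : ∀ z ∈ T, z ∈ S)
    (hyR1 : y ∈ R1) (hyb : y ≠ b')
    (hTmeet : ∀ z ∈ T, (z ∈ R1 ∨ z ∈ R2) → z = b' ∨ z = y) :
    ∃ branch P, IsSubdivisionIn W2 D branch P ∧ branch 1 = b' ∧ branch 2 = c' := by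
  have hb'R1 : b' ∈ R1 := mem_of_getLast?_eq hR1.2.2
  have hb'S : b' ∈ S := hR1S b' hb'R1
  have hx1R1 : x1 ∈ R1 := mem_of_head?_eq hR1.2.1
  have hx2R2 : x2 ∈ R2 := mem_of_head?_eq hR2.2.1
  have hx1b : x1 ≠ b' := by
    rintro rfl
    have h1 := eq_singleton_of_dipath_self hR1
    rw [h1] at hyR1
    exact hyb (List.mem_singleton.1 hyR1)
  have hyS : y ∈ S := hR1S y hyR1
  have hyc : y ≠ c' := fun h => hc'S (h ▸ hyS)
  have hbc : b' ≠ c' := fun h => hc'S (h ▸ hb'S)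
  have hcx1 : c' ≠ x1 := fun h => hc'S (h ▸ hx1S)
  have hcx2 : c' ≠ x2 := fun h => hc'S (h ▸ hx2S)
  have hx1R2 : x1 ∉ R2 := fun h => hx1b (hRR x1 hx1R1 h)
  have hb'Q1 : b' ∉ Q1 := fun h => hx1b (hQ1S b' h hb'S).symm
  have hyQ2 : y ∉ Q2 := by
    intro h
    have h1 : y = x2 := hQ2S y h hyS
    have h2 : x2 = b' := hRR x2 (h1 ▸ hyR1) hx2R2
    exact hyb (h1.trans h2)
  have hR1nd : R1.Nodup := hR1.1.2.2
  -- the four paths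
  have hA01 : DipathFromTo D (suffixFrom y R1) y b' := dipathFromTo_suffixFrom hR1 hyR1
  have hpre : DipathFromTo D (prefixTo y R1) x1 y := dipathFromTo_prefixTo hR1 hyR1
  have hA20 : DipathFromTo D (Q1 ++ (prefixTo y R1).tail) c' y :=
    dipath_append hQ1 hpre (fun w hw hw' => hQ1S w hw (hR1S w (mem_of_mem_prefixTo hyR1 hw')))
  have hA21 : DipathFromTo D (Q2 ++ R2.tail) c' b' :=
    dipath_append hQ2 hR2 (fun w hw hw' => hQ2S w hw (hR2S w hw'))
  -- membership decompositions
  have hmem20 : ∀ z ∈ Q1 ++ (prefixTo y R1).tail, z ∈ Q1 ∨ z ∈ prefixTo y R1 :=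
    fun z hz => mem_of_mem_append_tail hz
  have hmem21 : ∀ z ∈ Q2 ++ R2.tail, z ∈ Q2 ∨ z ∈ R2 := fun z hz => mem_of_mem_append_tail hz
  have hb'suf : b' ∈ suffixFrom y R1 := mem_of_getLast?_eq hA01.2.2
  have hx1pre : x1 ∈ prefixTo y R1 :=
    mem_of_head?_eq (by rw [head?_prefixTo hR1.1.1, hR1.2.1])
  have hb'20 : b' ∉ Q1 ++ (prefixTo y R1).tail := by
    intro h
    rcases hmem20 b' h with h | h
    · exact hb'Q1 h
    · exact hyb (eq_of_mem_prefixTo_of_mem_suffixFrom hR1nd hyR1 h hb'suf).symm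
  have hy21 : y ∉ Q2 ++ R2.tail := by
    intro h
    rcases hmem21 y h with h | h
    · exact hyQ2 h
    · exact hyb (hRR y hyR1 h)
  -- interior descriptions
  have hi01 : ∀ z ∈ interiorL (suffixFrom y R1), z ∈ R1 ∧ z ≠ y ∧ z ≠ b' := by
    intro z hz
    obtain ⟨hm, h1, h2⟩ := interior_facts hA01 hz
    exact ⟨mem_of_mem_suffixFrom hm, h1, h2⟩
  have hi10 : ∀ z ∈ interiorL T, z ∈ T ∧ z ≠ b' ∧ z ≠ y := fun z hz => interior_facts hT hz
  have hi20 : ∀ z ∈ interiorL (Q1 ++ (prefixTo y R1).tail),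
      (z ∈ Q1 ∨ z ∈ prefixTo y R1) ∧ z ≠ c' ∧ z ≠ y := by
    intro z hz
    obtain ⟨hm, h1, h2⟩ := interior_facts hA20 hz
    exact ⟨hmem20 z hm, h1, h2⟩
  have hi21 : ∀ z ∈ interiorL (Q2 ++ R2.tail), (z ∈ Q2 ∨ z ∈ R2) ∧ z ≠ c' ∧ z ≠ b' := by
    intro z hz
    obtain ⟨hm, h1, h2⟩ := interior_facts hA21 hz
    exact ⟨hmem21 z hm, h1, h2⟩
  -- pairwise interior disjointness
  have hD_01_10 : ∀ z, z ∈ interiorL (suffixFrom y R1) → z ∈ interiorL T → False := by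
    intro z h1 h2
    obtain ⟨hm1, _, _⟩ := hi01 z h1
    obtain ⟨hm2, hb, hy2⟩ := hi10 z h2
    rcases hTmeet z hm2 (Or.inl hm1) with h | h
    exacts [hb h, hy2 h]
  have hD_01_20 : ∀ z, z ∈ interiorL (suffixFrom y R1) →
      z ∈ interiorL (Q1 ++ (prefixTo y R1).tail) → False := by
    intro z h1 h2
    obtain ⟨hm1, hzy, hzb⟩ := hi01 z h1
    have hm1' : z ∈ suffixFrom y R1 := mem_of_mem_interiorL h1
    obtain ⟨hm2, _, _⟩ := hi20 z h2
    rcases hm2 with h | h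
    · have hzx1 : z = x1 := hQ1S z h (hR1S z hm1)
      subst hzx1
      exact hzy (eq_of_mem_prefixTo_of_mem_suffixFrom hR1nd hyR1 hx1pre hm1')
    · exact hzy (eq_of_mem_prefixTo_of_mem_suffixFrom hR1nd hyR1 h hm1')
  have hD_01_21 : ∀ z, z ∈ interiorL (suffixFrom y R1) →
      z ∈ interiorL (Q2 ++ R2.tail) → False := by
    intro z h1 h2
    obtain ⟨hm1, _, hzb⟩ := hi01 z h1
    obtain ⟨hm2, _, _⟩ := hi21 z h2
    rcases hm2 with h | h
    · have hzx2 : z = x2 := hQ2S z h (hR1S z hm1)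
      exact hzb (hRR z hm1 (hzx2 ▸ hx2R2))
    · exact hzb (hRR z hm1 h)
  have hD_10_20 : ∀ z, z ∈ interiorL T →
      z ∈ interiorL (Q1 ++ (prefixTo y R1).tail) → False := by
    intro z h1 h2
    obtain ⟨hm1, hb, hy2⟩ := hi10 z h1
    obtain ⟨hm2, _, _⟩ := hi20 z h2
    have hzR1 : z ∈ R1 := by
      rcases hm2 with h | h
      · have := hQ1S z h (hTS z hm1)
        exact this ▸ hx1R1
      · exact mem_of_mem_prefixTo hyR1 h
    rcases hTmeet z hm1 (Or.inl hzR1) with h | h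
    exacts [hb h, hy2 h]
  have hD_10_21 : ∀ z, z ∈ interiorL T → z ∈ interiorL (Q2 ++ R2.tail) → False := by
    intro z h1 h2
    obtain ⟨hm1, hb, hy2⟩ := hi10 z h1
    obtain ⟨hm2, _, _⟩ := hi21 z h2
    have hzR2 : z ∈ R2 := by
      rcases hm2 with h | h
      · have := hQ2S z h (hTS z hm1)
        exact this ▸ hx2R2
      · exact h
    rcases hTmeet z hm1 (Or.inr hzR2) with h | h
    exacts [hb h, hy2 h]
  have hD_20_21 : ∀ z, z ∈ interiorL (Q1 ++ (prefixTo y R1).tail) →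
      z ∈ interiorL (Q2 ++ R2.tail) → False := by
    intro z h1 h2
    obtain ⟨hm1, hzc, _⟩ := hi20 z h1
    obtain ⟨hm2, _, hzb⟩ := hi21 z h2
    have hm1' : z ∈ Q1 ∨ z ∈ R1 := hm1.imp id (mem_of_mem_prefixTo hyR1)
    rcases hm1' with h | h
    · rcases hm2 with h' | h'
      · exact hzc (hQQ z h h')
      · have := hQ1S z h (hR2S z h')
        exact hx1R2 (this ▸ h')
    · rcases hm2 with h' | h'
      · have hz2 : z = x2 := hQ2S z h' (hR1S z h)
        exact hzb (hRR z h (hz2 ▸ hx2R2))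
      · exact hzb (hRR z h h')
  -- lengths
  have hlen01 : 2 ≤ (suffixFrom y R1).length := two_le_length_dipath hA01 hyb
  have hlen10 : 2 ≤ T.length := two_le_length_dipath hT (Ne.symm hyb)
  have hlen20 : 2 ≤ (Q1 ++ (prefixTo y R1).tail).length := two_le_length_dipath hA20 (Ne.symm hyc)
  have hlen21 : 2 ≤ (Q2 ++ R2.tail).length := two_le_length_dipath hA21 (Ne.symm hbc)
  refine ⟨(fun i => if i = 0 then y else if i = 1 then b' else c'),
    (fun u v => if u = 0 then suffixFrom y R1 else if u = 1 then T
      else if v = 0 then Q1 ++ (prefixTo y R1).tail else Q2 ++ R2.tail),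
    ⟨?_, ?_, ?_, ?_⟩, rfl, rfl⟩
  · intro u v h
    rcases fin3_cases u with rfl | rfl | rfl <;> rcases fin3_cases v with rfl | rfl | rfl <;>
      first
        | rfl
        | exact absurd h hyb
        | exact absurd h hyc
        | exact absurd h hbc
        | exact absurd h.symm hyb
        | exact absurd h.symm hyc
        | exact absurd h.symm hbc
  · intro u v huv
    rcases W2_cases u v huv with ⟨rfl, rfl⟩ | ⟨rfl, rfl⟩ | ⟨rfl, rfl⟩ | ⟨rfl, rfl⟩
    · exact ⟨hA01, hlen01⟩
    · exact ⟨hT, hlen10⟩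
    · exact ⟨hA20, hlen20⟩
    · exact ⟨hA21, hlen21⟩
  · intro u v huv z hz w
    rcases W2_cases u v huv with ⟨rfl, rfl⟩ | ⟨rfl, rfl⟩ | ⟨rfl, rfl⟩ | ⟨rfl, rfl⟩ <;>
      rcases fin3_cases w with rfl | rfl | rfl
    · exact (hi01 z hz).2.1
    · exact (hi01 z hz).2.2
    · intro h
      have h' : z = c' := h
      exact hc'S (h' ▸ hR1S z (hi01 z hz).1)
    · exact (hi10 z hz).2.2
    · exact (hi10 z hz).2.1
    · intro h
      have h' : z = c' := h
      exact hc'S (h' ▸ hTS z (hi10 z hz).1)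
    · exact (hi20 z hz).2.2
    · intro h
      have h' : z = b' := h
      exact hb'20 (h' ▸ mem_of_mem_interiorL hz)
    · exact (hi20 z hz).2.1
    · intro h
      have h' : z = y := h
      exact hy21 (h' ▸ mem_of_mem_interiorL hz)
    · exact (hi21 z hz).2.2
    · exact (hi21 z hz).2.1
  · intro u v u' v' h1 h2 hne z hz
    rcases W2_cases u v h1 with ⟨rfl, rfl⟩ | ⟨rfl, rfl⟩ | ⟨rfl, rfl⟩ | ⟨rfl, rfl⟩ <;>
      rcases W2_cases u' v' h2 with ⟨rfl, rfl⟩ | ⟨rfl, rfl⟩ | ⟨rfl, rfl⟩ | ⟨rfl, rfl⟩ <;>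
      first
        | exact absurd rfl hne
        | exact fun hz' => hD_01_10 z hz hz'
        | exact fun hz' => hD_01_10 z hz' hz
        | exact fun hz' => hD_01_20 z hz hz'
        | exact fun hz' => hD_01_20 z hz' hz
        | exact fun hz' => hD_01_21 z hz hz'
        | exact fun hz' => hD_01_21 z hz' hz
        | exact fun hz' => hD_10_20 z hz hz'
        | exact fun hz' => hD_10_20 z hz' hz
        | exact fun hz' => hD_10_21 z hz hz'
        | exact fun hz' => hD_10_21 z hz' hz
        | exact fun hz' => hD_20_21 z hz hz'
        | exact fun hz' => hD_20_21 z hz' hz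

end WMain

/-- characterization of `(b',c')`-forced `W₂`-subdivisions. -/
theorem W2_forced_characterization (D : V → V → Prop) (b' c' : V) (hbc : b' ≠ c') :
    (∃ branch P, IsSubdivisionIn W2 D branch P ∧ branch 1 = b' ∧ branch 2 = c') ↔
    ∃ x1 x2 : V, x1 ≠ x2 ∧ x1 ∈ SComp D b' c' ∧ x2 ∈ SComp D b' c' ∧
      (∃ Q1 Q2 : List V,
        DipathFromTo (restrict D ({v | v ∉ SComp D b' c'} ∪ {x1, x2})) Q1 c' x1 ∧
        DipathFromTo (restrict D ({v | v ∉ SComp D b' c'} ∪ {x1, x2})) Q2 c' x2 ∧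
        (∀ z, z ∈ Q1 → z ∈ Q2 → z = c')) ∧
      (∃ R1 R2 : List V,
        DipathFromTo (restrict D (SComp D b' c')) R1 x1 b' ∧
        DipathFromTo (restrict D (SComp D b' c')) R2 x2 b' ∧
        (∀ z, z ∈ R1 → z ∈ R2 → z = b')) := by
  classical
  constructor
  · -- forward
    rintro ⟨branch, P, ⟨hinj, hpath, hint, hdisj⟩, hb1, hb2⟩
    have h01 := W2_01; have h10 := W2_10; have h20 := W2_20; have h21 := W2_21
    have hP01 : DipathFromTo D (P 0 1) (branch 0) b' := by
      have := (hpath 0 1 h01).1; rwa [hb1] at this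
    have hP10 : DipathFromTo D (P 1 0) b' (branch 0) := by
      have := (hpath 1 0 h10).1; rwa [hb1] at this
    have hP20 : DipathFromTo D (P 2 0) c' (branch 0) := by
      have := (hpath 2 0 h20).1; rwa [hb2] at this
    have hP21 : DipathFromTo D (P 2 1) c' b' := by
      have := (hpath 2 1 h21).1; rwa [hb1, hb2] at this
    have hne01 : branch 0 ≠ b' := by
      rw [← hb1]; exact fun h => absurd (hinj h) (by decide)
    have hne02 : branch 0 ≠ c' := by
      rw [← hb2]; exact fun h => absurd (hinj h) (by decide)
    have hmemP : ∀ u v : Fin 3, W2 u v → ∀ z ∈ P u v,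
        z ∈ interiorL (P u v) ∨ z = branch u ∨ z = branch v := by
      intro u v huv z hz
      by_cases e1 : z = branch u
      · exact Or.inr (Or.inl e1)
      by_cases e2 : z = branch v
      · exact Or.inr (Or.inr e2)
      exact Or.inl (mem_interiorL_of_ne (hpath u v huv).1.2.1 (hpath u v huv).1.2.2 hz e1 e2)
    have hcnotin : ∀ u v : Fin 3, W2 u v → u ≠ 2 → v ≠ 2 → c' ∉ P u v := by
      intro u v huv hu hv hmem
      rcases hmemP u v huv c' hmem with h | h | h
      · exact (hint u v huv c' h 2) hb2.symm
      · exact hu (hinj (by rw [hb2, h])).symm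
      · exact hv (hinj (by rw [hb2, h])).symm
    have hinter : ∀ u v u' v' : Fin 3, W2 u v → W2 u' v' → (u, v) ≠ (u', v') →
        ∀ z, z ∈ P u v → z ∈ P u' v' →
        (z = branch u ∨ z = branch v) ∧ (z = branch u' ∨ z = branch v') := by
      intro u v u' v' h1 h2 hne z hz hz'
      have hA : z = branch u ∨ z = branch v := by
        rcases hmemP u v h1 z hz with h | h
        · exfalso
          rcases hmemP u' v' h2 z hz' with h' | h' | h'
          · exact hdisj u v u' v' h1 h2 hne z h h'
          · exact (hint u v h1 z h u') h'
          · exact (hint u v h1 z h v') h'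
        · exact h
      refine ⟨hA, ?_⟩
      rcases hmemP u' v' h2 z hz' with h' | h'
      · exfalso
        rcases hA with ha | ha
        · exact (hint u' v' h2 z h' u) ha
        · exact (hint u' v' h2 z h' v) ha
      · exact h'
    have hP20P21 : ∀ z, z ∈ P 2 0 → z ∈ P 2 1 → z = c' := by
      intro z hz hz'
      obtain ⟨ha, hb⟩ := hinter 2 0 2 1 h20 h21 (by decide) z hz hz'
      rcases ha with h | h
      · rw [h, hb2]
      rcases hb with h' | h'
      · rw [h', hb2]
      · exact absurd (h.symm.trans (h'.trans hb1)) hne01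
    have hP20P01 : ∀ z, z ∈ P 2 0 → z ∈ P 0 1 → z = branch 0 := by
      intro z hz hz'
      obtain ⟨ha, hb⟩ := hinter 2 0 0 1 h20 h01 (by decide) z hz hz'
      rcases hb with h' | h'
      · exact h'
      rcases ha with h | h
      · exact absurd (hb1.symm.trans ((h'.symm.trans h).trans hb2)) hbc
      · exact h
    have hP01P21 : ∀ z, z ∈ P 0 1 → z ∈ P 2 1 → z = b' := by
      intro z hz hz'
      obtain ⟨ha, hb⟩ := hinter 0 1 2 1 h01 h21 (by decide) z hz hz'
      rcases ha with h | h
      · rcases hb with h' | h'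
        · exact absurd ((h.symm.trans h').trans hb2) hne02
        · exact h'.trans hb1
      · exact h.trans hb1
    have hcP01 : c' ∉ P 0 1 := hcnotin 0 1 h01 (by decide) (by decide)
    have hcP10 : c' ∉ P 1 0 := hcnotin 1 0 h10 (by decide) (by decide)
    have hreach : ∀ (l : List V) (x y : V), DipathFromTo D l x y → c' ∉ l →
        ReachIn D {x : V | x ≠ c'} x y := by
      intro l x y h hc
      refine reachIn_of_dipath h ?_
      intro z hz
      simp only [Set.mem_setOf_eq]
      rintro rfl
      exact hc hz
    have hP01S : ∀ z ∈ P 0 1, z ∈ SComp D b' c' := by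
      intro z hz
      refine ⟨(hreach _ _ _ hP10 hcP10).trans ?_, ?_⟩
      · exact hreach _ _ _ (dipathFromTo_prefixTo hP01 hz)
          (fun hc => hcP01 (mem_of_mem_prefixTo hz hc))
      · exact hreach _ _ _ (dipathFromTo_suffixFrom hP01 hz)
          (fun hc => hcP01 (mem_of_mem_suffixFrom hc))
    have hP10S : ∀ z ∈ P 1 0, z ∈ SComp D b' c' := by
      intro z hz
      refine ⟨hreach _ _ _ (dipathFromTo_prefixTo hP10 hz)
        (fun hc => hcP10 (mem_of_mem_prefixTo hz hc)), ?_⟩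
      refine (hreach _ _ _ (dipathFromTo_suffixFrom hP10 hz)
        (fun hc => hcP10 (mem_of_mem_suffixFrom hc))).trans ?_
      exact hreach _ _ _ hP01 hcP01
    have ha'S : branch 0 ∈ SComp D b' c' := hP01S _ (mem_of_head?_eq hP01.2.1)
    have hcS : c' ∉ SComp D b' c' := sComp_not_centre hbc
    -- define x1
    have hfind1 : (List.find? (fun z => decide (z ∈ SComp D b' c')) (P 2 0)).isSome :=
      List.find?_isSome.2 ⟨branch 0, mem_of_getLast?_eq hP20.2.2, by simpa using ha'S⟩
    obtain ⟨x1, hx1f⟩ := Option.isSome_iff_exists.1 hfind1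
    have hx1S : x1 ∈ SComp D b' c' := by simpa using List.find?_some hx1f
    have hx1m : x1 ∈ P 2 0 := List.mem_of_find?_eq_some hx1f
    have hfind2 : (List.find? (fun z => decide (z ∈ SComp D b' c')) (P 2 1)).isSome :=
      List.find?_isSome.2 ⟨b', mem_of_getLast?_eq hP21.2.2, by simpa using sComp_self (D := D) (b' := b') (c' := c')⟩
    obtain ⟨x2, hx2f⟩ := Option.isSome_iff_exists.1 hfind2
    have hx2S : x2 ∈ SComp D b' c' := by simpa using List.find?_some hx2f
    have hx2m : x2 ∈ P 2 1 := List.mem_of_find?_eq_some hx2f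
    have hx12 : x1 ≠ x2 := by
      rintro rfl
      exact hcS ((hP20P21 x1 hx1m hx2m) ▸ hx1S)
    -- Q paths
    have hQ1D : DipathFromTo D (prefixTo x1 (P 2 0)) c' x1 := dipathFromTo_prefixTo hP20 hx1m
    have hQ2D : DipathFromTo D (prefixTo x2 (P 2 1)) c' x2 := dipathFromTo_prefixTo hP21 hx2m
    have hQ1set : ∀ z ∈ prefixTo x1 (P 2 0),
        z ∈ ({v | v ∉ SComp D b' c'} ∪ {x1, x2} : Set V) := by
      intro z hz
      unfold prefixTo at hz
      rcases List.mem_append.1 hz with h | h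
      · left
        have := not_p_of_mem_takeWhile_find? hx1f h
        simpa using this
      · right
        rcases List.mem_singleton.1 h with rfl
        exact Set.mem_insert _ _
    have hQ2set : ∀ z ∈ prefixTo x2 (P 2 1),
        z ∈ ({v | v ∉ SComp D b' c'} ∪ {x1, x2} : Set V) := by
      intro z hz
      unfold prefixTo at hz
      rcases List.mem_append.1 hz with h | h
      · left
        have := not_p_of_mem_takeWhile_find? hx2f h
        simpa using this
      · right
        rcases List.mem_singleton.1 h with rfl
        exact Set.mem_insert_of_mem _ rfl
    -- R2
    have hR2D : DipathFromTo D (suffixFrom x2 (P 2 1)) x2 b' := dipathFromTo_suffixFrom hP21 hx2m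
    have hcR2 : c' ∉ suffixFrom x2 (P 2 1) := by
      intro h
      have hcpre : c' ∈ prefixTo x2 (P 2 1) :=
        mem_of_head?_eq (by rw [head?_prefixTo hP21.1.1, hP21.2.1])
      have := eq_of_mem_prefixTo_of_mem_suffixFrom hP21.1.2.2 hx2m hcpre h
      exact hcS (this ▸ hx2S)
    have hR2S : ∀ z ∈ suffixFrom x2 (P 2 1), z ∈ SComp D b' c' := by
      intro z hz
      refine ⟨hx2S.1.trans ?_, ?_⟩
      · exact hreach _ _ _ (dipathFromTo_prefixTo hR2D hz)
          (fun hc => hcR2 (mem_of_mem_prefixTo hz hc))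
      · exact hreach _ _ _ (dipathFromTo_suffixFrom hR2D hz)
          (fun hc => hcR2 (mem_of_mem_suffixFrom hc))
    -- R1
    have hR1aD : DipathFromTo D (suffixFrom x1 (P 2 0)) x1 (branch 0) :=
      dipathFromTo_suffixFrom hP20 hx1m
    have hcR1a : c' ∉ suffixFrom x1 (P 2 0) := by
      intro h
      have hcpre : c' ∈ prefixTo x1 (P 2 0) :=
        mem_of_head?_eq (by rw [head?_prefixTo hP20.1.1, hP20.2.1])
      have := eq_of_mem_prefixTo_of_mem_suffixFrom hP20.1.2.2 hx1m hcpre h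
      exact hcS (this ▸ hx1S)
    have hR1aS : ∀ z ∈ suffixFrom x1 (P 2 0), z ∈ SComp D b' c' := by
      intro z hz
      refine ⟨hx1S.1.trans (hreach _ _ _ (dipathFromTo_prefixTo hR1aD hz)
        (fun hc => hcR1a (mem_of_mem_prefixTo hz hc))), ?_⟩
      refine (hreach _ _ _ (dipathFromTo_suffixFrom hR1aD hz)
        (fun hc => hcR1a (mem_of_mem_suffixFrom hc))).trans ?_
      exact hreach _ _ _ hP01 hcP01
    have hR1 : DipathFromTo (restrict D (SComp D b' c'))
        (suffixFrom x1 (P 2 0) ++ (P 0 1).tail) x1 b' :=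
      dipath_append (dipath_restrict hR1aD hR1aS) (dipath_restrict hP01 hP01S)
        (fun w hw hw' => hP20P01 w (mem_of_mem_suffixFrom hw) hw')
    have hRR : ∀ z, z ∈ suffixFrom x1 (P 2 0) ++ (P 0 1).tail →
        z ∈ suffixFrom x2 (P 2 1) → z = b' := by
      intro z hz hz'
      have hz2 : z ∈ P 2 1 := mem_of_mem_suffixFrom hz'
      rcases mem_of_mem_append_tail hz with h | h
      · have hzc : z = c' := hP20P21 z (mem_of_mem_suffixFrom h) hz2
        exact absurd (hzc ▸ hR2S z hz') hcS
      · exact hP01P21 z h hz2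
    refine ⟨x1, x2, hx12, hx1S, hx2S,
      ⟨prefixTo x1 (P 2 0), prefixTo x2 (P 2 1),
        dipath_restrict hQ1D hQ1set, dipath_restrict hQ2D hQ2set,
        fun z h h' => hP20P21 z (mem_of_mem_prefixTo hx1m h) (mem_of_mem_prefixTo hx2m h')⟩,
      ⟨suffixFrom x1 (P 2 0) ++ (P 0 1).tail, suffixFrom x2 (P 2 1),
        hR1, dipath_restrict hR2D hR2S, hRR⟩⟩
  · -- backward
    rintro ⟨x1, x2, hx12, hx1S, hx2S, ⟨Q1, Q2, hQ1, hQ2, hQQ⟩, ⟨R1, R2, hR1, hR2, hRR⟩⟩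
    have hc'S : c' ∉ SComp D b' c' := sComp_not_centre hbc
    have hb'S : b' ∈ SComp D b' c' := sComp_self
    have hcx1 : c' ≠ x1 := fun h => hc'S (h ▸ hx1S)
    have hcx2 : c' ≠ x2 := fun h => hc'S (h ▸ hx2S)
    have hQ1D := dipath_of_restrict hQ1
    have hQ2D := dipath_of_restrict hQ2
    have hQ1U := mem_set_of_dipath_restrict hQ1 hcx1
    have hQ2U := mem_set_of_dipath_restrict hQ2 hcx2
    have hR1D := dipath_of_restrict hR1
    have hR2D := dipath_of_restrict hR2
    have hR1S : ∀ z ∈ R1, z ∈ SComp D b' c' := mem_set_of_dipath_restrict' hR1 hx1S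
    have hR2S : ∀ z ∈ R2, z ∈ SComp D b' c' := mem_set_of_dipath_restrict' hR2 hx2S
    -- truncate Q1, Q2 at the first x1/x2 hit
    have hf1 : (Q1.find? (fun z => decide (z = x1 ∨ z = x2))).isSome :=
      List.find?_isSome.2 ⟨x1, mem_of_getLast?_eq hQ1D.2.2, by simp⟩
    obtain ⟨y1, hy1⟩ := Option.isSome_iff_exists.1 hf1
    have hy1or : y1 = x1 ∨ y1 = x2 := by simpa using List.find?_some hy1
    have hy1m : y1 ∈ Q1 := List.mem_of_find?_eq_some hy1
    have hf2 : (Q2.find? (fun z => decide (z = x1 ∨ z = x2))).isSome :=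
      List.find?_isSome.2 ⟨x2, mem_of_getLast?_eq hQ2D.2.2, by simp⟩
    obtain ⟨y2, hy2⟩ := Option.isSome_iff_exists.1 hf2
    have hy2or : y2 = x1 ∨ y2 = x2 := by simpa using List.find?_some hy2
    have hy2m : y2 ∈ Q2 := List.mem_of_find?_eq_some hy2
    have hQ1' : DipathFromTo D (prefixTo y1 Q1) c' y1 := dipathFromTo_prefixTo hQ1D hy1m
    have hQ2' : DipathFromTo D (prefixTo y2 Q2) c' y2 := dipathFromTo_prefixTo hQ2D hy2m
    have hQ1'S : ∀ z ∈ prefixTo y1 Q1, z ∈ SComp D b' c' → z = y1 := by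
      intro z hz hzS
      unfold prefixTo at hz
      rcases List.mem_append.1 hz with h | h
      · exfalso
        have h2 : ¬(z = x1 ∨ z = x2) := by
          simpa using not_p_of_mem_takeWhile_find? hy1 h
        rcases hQ1U z ((List.takeWhile_prefix _).subset h) with hns | hx
        · exact hns hzS
        · exact h2 (by simpa using hx)
      · exact List.mem_singleton.1 h
    have hQ2'S : ∀ z ∈ prefixTo y2 Q2, z ∈ SComp D b' c' → z = y2 := by
      intro z hz hzS
      unfold prefixTo at hz
      rcases List.mem_append.1 hz with h | h
      · exfalso
        have h2 : ¬(z = x1 ∨ z = x2) := by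
          simpa using not_p_of_mem_takeWhile_find? hy2 h
        rcases hQ2U z ((List.takeWhile_prefix _).subset h) with hns | hx
        · exact hns hzS
        · exact h2 (by simpa using hx)
      · exact List.mem_singleton.1 h
    have hy12 : y1 ≠ y2 := by
      rintro rfl
      have hyc : y1 = c' := hQQ y1 hy1m hy2m
      rcases hy1or with rfl | rfl
      · exact hc'S (hyc ▸ hx1S)
      · exact hc'S (hyc ▸ hx2S)
    obtain ⟨Qa, Qb, hQa, hQaS, hQb, hQbS, hQab⟩ :
        ∃ Qa Qb, DipathFromTo D Qa c' x1 ∧ (∀ z ∈ Qa, z ∈ SComp D b' c' → z = x1) ∧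
          DipathFromTo D Qb c' x2 ∧ (∀ z ∈ Qb, z ∈ SComp D b' c' → z = x2) ∧
          (∀ z ∈ Qa, z ∈ Qb → z = c') := by
      rcases hy1or with rfl | rfl
      · obtain rfl : y2 = x2 := by
          rcases hy2or with h | h
          · exact absurd h.symm hy12
          · exact h
        exact ⟨prefixTo y1 Q1, prefixTo y2 Q2, hQ1', hQ1'S, hQ2', hQ2'S,
          fun z hz hz' => hQQ z (mem_of_mem_prefixTo hy1m hz) (mem_of_mem_prefixTo hy2m hz')⟩
      · obtain rfl : y2 = x1 := by
          rcases hy2or with h | h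
          · exact h
          · exact absurd h.symm hy12
        exact ⟨prefixTo y2 Q2, prefixTo y1 Q1, hQ2', hQ2'S, hQ1', hQ1'S,
          fun z hz hz' => hQQ z (mem_of_mem_prefixTo hy1m hz') (mem_of_mem_prefixTo hy2m hz)⟩
    -- find the path T from b' back to R1 ∪ R2
    have hx1R1m : x1 ∈ R1 := mem_of_head?_eq hR1D.2.1
    have hx2R2m : x2 ∈ R2 := mem_of_head?_eq hR2D.2.1
    obtain ⟨t, htS, htq⟩ : ∃ t, t ∈ SComp D b' c' ∧
        (fun z => decide ((z ∈ R1 ∨ z ∈ R2) ∧ z ≠ b')) t = true := by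
      by_cases h : x1 = b'
      · refine ⟨x2, hx2S, ?_⟩
        simp only [decide_eq_true_eq]
        exact ⟨Or.inr hx2R2m, fun e => hx12 (h.trans e.symm)⟩
      · refine ⟨x1, hx1S, ?_⟩
        simp only [decide_eq_true_eq]
        exact ⟨Or.inl hx1R1m, h⟩
    obtain ⟨W, hW⟩ := exists_dipath_of_reflTransGen (sComp_reachIn hb'S htS)
    have hWD := dipath_of_restrict hW
    have hWS : ∀ z ∈ W, z ∈ SComp D b' c' := mem_set_of_dipath_restrict' hW hb'S
    have hfW : (W.find? (fun z => decide ((z ∈ R1 ∨ z ∈ R2) ∧ z ≠ b'))).isSome :=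
      List.find?_isSome.2 ⟨t, mem_of_getLast?_eq hWD.2.2, htq⟩
    obtain ⟨y, hyf⟩ := Option.isSome_iff_exists.1 hfW
    have hyq : (y ∈ R1 ∨ y ∈ R2) ∧ y ≠ b' := by simpa using List.find?_some hyf
    have hym : y ∈ W := List.mem_of_find?_eq_some hyf
    have hT : DipathFromTo D (prefixTo y W) b' y := dipathFromTo_prefixTo hWD hym
    have hTS : ∀ z ∈ prefixTo y W, z ∈ SComp D b' c' :=
      fun z hz => hWS z (mem_of_mem_prefixTo hym hz)
    have hTmeet : ∀ z ∈ prefixTo y W, (z ∈ R1 ∨ z ∈ R2) → z = b' ∨ z = y := by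
      intro z hz hzR
      unfold prefixTo at hz
      rcases List.mem_append.1 hz with h | h
      · left
        have h2 : ¬((z ∈ R1 ∨ z ∈ R2) ∧ z ≠ b') := by
          simpa using not_p_of_mem_takeWhile_find? hyf h
        by_contra hzb
        exact h2 ⟨hzR, hzb⟩
      · exact Or.inr (List.mem_singleton.1 h)
    rcases hyq.1 with hyR | hyR
    · exact aux2 hc'S hx1S hx2S hQa hQb hQaS hQbS hQab hR1D hR2D hR1S hR2S hRR
        hT hTS hyR hyq.2 hTmeet
    · exact aux2 hc'S hx2S hx1S hQb hQa hQbS hQaS (fun z hz hz' => hQab z hz' hz)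
        hR2D hR1D hR2S hR1S (fun z hz hz' => hRR z hz' hz)
        hT hTS hyR hyq.2 (fun z hz h => hTmeet z hz h.symm)
end

section
/- Let D be a strong digraph, X a set of three distinct vertices of D, and (W, S, Z) a 1-separation of (X, Y) for some triple Y of vertices, with S = {s}. Let D1 be the digraph obtained from D[W ∪ S] by adding the arc sw for every vertex w in W having an in-neighbour in Z. Then D contains an X-tripod if and only if D1 contains an X-tripod. -/
open List

variable {V : Type*}

/-- An `{x1,x2,x3}`-tripod: a directed cycle `C` together with three pairwise disjoint
dipaths `P1, P2, P3` starting at `x1, x2, x3` respectively and ending on `C`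
(the paths may have length 0). -/
def IsTripod (D : V → V → Prop) (x1 x2 x3 : V) (C P1 P2 P3 : List V) : Prop :=
  IsDicycle D C ∧
  IsDipath D P1 ∧ IsDipath D P2 ∧ IsDipath D P3 ∧
  P1.head? = some x1 ∧ P2.head? = some x2 ∧ P3.head? = some x3 ∧
  (∀ a ∈ P1.getLast?, a ∈ C) ∧ (∀ a ∈ P2.getLast?, a ∈ C) ∧ (∀ a ∈ P3.getLast?, a ∈ C) ∧
  (∀ z, z ∈ P1 → z ∉ P2) ∧ (∀ z, z ∈ P1 → z ∉ P3) ∧ (∀ z, z ∈ P2 → z ∉ P3)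

/-- An unfolded tripod: each leg meets the cycle only in its terminal vertex and
meets `{x1,x2,x3}` only in its initial vertex. -/
def IsUnfoldedTripod (D : V → V → Prop) (x1 x2 x3 : V) (C P1 P2 P3 : List V) : Prop :=
  IsTripod D x1 x2 x3 C P1 P2 P3 ∧
  (∀ z ∈ P1, z ∈ C → P1.getLast? = some z) ∧
  (∀ z ∈ P2, z ∈ C → P2.getLast? = some z) ∧
  (∀ z ∈ P3, z ∈ C → P3.getLast? = some z) ∧
  (∀ z ∈ P1, (z = x1 ∨ z = x2 ∨ z = x3) → P1.head? = some z) ∧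
  (∀ z ∈ P2, (z = x1 ∨ z = x2 ∨ z = x3) → P2.head? = some z) ∧
  (∀ z ∈ P3, (z = x1 ∨ z = x2 ∨ z = x3) → P3.head? = some z)

@[simp] theorem chain'_nil {R : V → V → Prop} : Chain' R [] := isChain_nil

theorem chain'_cons {R : V → V → Prop} {a b : V} {l : List V} :
    Chain' R (a :: b :: l) ↔ R a b ∧ Chain' R (b :: l) := isChain_cons_cons

theorem chain'_cons' {R : V → V → Prop} {a : V} {l : List V} :
    Chain' R (a :: l) ↔ (∀ y ∈ l.head?, R a y) ∧ Chain' R l := isChain_cons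

theorem chain'_append {R : V → V → Prop} {l₁ l₂ : List V} :
    Chain' R (l₁ ++ l₂) ↔ Chain' R l₁ ∧ Chain' R l₂ ∧
      ∀ x ∈ l₁.getLast?, ∀ y ∈ l₂.head?, R x y := isChain_append

section Aux
variable {D : V → V → Prop} {W Z : Set V} {s : V}

variable {D : V → V → Prop} {W Z : Set V} {s : V}

/-- The augmented digraph on all of `V`. -/
def Dtwo (D : V → V → Prop) (W Z : Set V) (s : V) : V → V → Prop :=
  fun u v => D u v ∨ (u = s ∧ v ∈ W ∧ ∃ z ∈ Z, D z v)

/-- The digraph `D1`. -/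
def Done (D : V → V → Prop) (W Z : Set V) (s : V) : V → V → Prop :=
  fun u v => restrict D (W ∪ {s}) u v ∨ (u = s ∧ v ∈ W ∧ ∃ z ∈ Z, D z v)

lemma mem_WS (hcover : W ∪ {s} ∪ Z = Set.univ) {v : V} (hv : v ∉ Z) : v ∈ W ∪ {s} := by
  have : v ∈ W ∪ {s} ∪ Z := hcover ▸ Set.mem_univ v
  rcases this with h | h
  · exact h
  · exact absurd h hv

lemma intoZ2 (hWZ : W ∩ Z = ∅) (hcover : W ∪ {s} ∪ Z = Set.univ)
    (hnoarc : ∀ u ∈ W, ∀ v ∈ Z, ¬ D u v) {a b : V}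
    (h : Dtwo D W Z s a b) (hb : b ∈ Z) (ha : a ∉ Z) : a = s := by
  rcases h with h | ⟨rfl, hbW, _⟩
  · rcases mem_WS hcover ha with haW | has
    · exact absurd h (hnoarc a haW b hb)
    · exact has
  · exact absurd (Set.mem_inter hbW hb) (by rw [hWZ]; exact fun h => h.elim)

lemma D2toD1 (hcover : W ∪ {s} ∪ Z = Set.univ) {a b : V}
    (h : Dtwo D W Z s a b) (ha : a ∉ Z) (hb : b ∉ Z) : Done D W Z s a b := by
  rcases h with h | h
  · exact Or.inl ⟨h, mem_WS hcover ha, mem_WS hcover hb⟩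
  · exact Or.inr h

lemma chain'_imp_mem {R R' : V → V → Prop} :
    ∀ {l : List V}, l.Chain' R → (∀ a ∈ l, ∀ b ∈ l, R a b → R' a b) → l.Chain' R'
  | [], _, _ => isChain_nil
  | [_], _, _ => isChain_singleton _
  | a :: b :: t, h, himp => by
      rw [chain'_cons] at h ⊢
      refine ⟨himp a (by simp) b (by simp) h.1, chain'_imp_mem h.2 ?_⟩
      exact fun x hx y hy hr => himp x (mem_cons_of_mem _ hx) y (mem_cons_of_mem _ hy) hr

lemma getLast?_cons_ne {a : V} {t : List V} (h : t ≠ []) :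
    (a :: t).getLast? = t.getLast? := by
  cases t with
  | nil => exact absurd rfl h
  | cons b t' => exact getLast?_cons_cons

lemma two_le_length_of_mem {l : List V} {a b : V} (ha : a ∈ l) (hb : b ∈ l) (hab : a ≠ b) :
    2 ≤ l.length := by
  match l with
  | [] => simp at ha
  | [c] => simp at ha hb; exact absurd (ha.trans hb.symm) hab
  | c :: d :: t => simp [Nat.le_add_left]

lemma head_ne_last_of_nodup {l : List V} {h e : V} (hnd : l.Nodup) (hlen : 2 ≤ l.length)
    (hh : l.head? = some h) (he : l.getLast? = some e) : h ≠ e := by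
  match l with
  | [] => simp at hh
  | [c] => simp at hlen
  | a :: b :: t =>
    have : a = h := by simpa using hh
    subst this
    have het : e ∈ b :: t := by
      have : (b :: t).getLast? = some e := by rwa [getLast?_cons_cons] at he
      exact mem_of_mem_getLast? this
    intro hcon
    exact (nodup_cons.mp hnd).1 (hcon ▸ het)


open Classical in
noncomputable def dropZ (Z : Set V) : List V → List V
  | [] => []
  | a :: t => if a ∈ Z then dropZ Z t else a :: dropZ Z t

lemma dropZ_sublist : ∀ l : List V, dropZ Z l <+ l
  | [] => by simp [dropZ]
  | a :: t => by
      rw [dropZ]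
      split
      · exact (dropZ_sublist t).trans (sublist_cons_self a t)
      · exact (dropZ_sublist t).cons₂ a

lemma mem_dropZ {x : V} : ∀ {l : List V}, x ∈ dropZ Z l ↔ x ∈ l ∧ x ∉ Z
  | [] => by simp [dropZ]
  | a :: t => by
      rw [dropZ]
      split
      · rw [mem_dropZ (l := t)]
        constructor
        · exact fun ⟨h1, h2⟩ => ⟨mem_cons_of_mem _ h1, h2⟩
        · rintro ⟨h1, h2⟩
          rcases mem_cons.mp h1 with rfl | h1
          · exact absurd ‹x ∈ Z› h2
          · exact ⟨h1, h2⟩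
      · rw [mem_cons, mem_dropZ (l := t)]
        constructor
        · rintro (rfl | ⟨h1, h2⟩)
          · exact ⟨mem_cons_self, ‹¬ x ∈ Z›⟩
          · exact ⟨mem_cons_of_mem _ h1, h2⟩
        · rintro ⟨h1, h2⟩
          rcases mem_cons.mp h1 with rfl | h1
          · exact Or.inl rfl
          · exact Or.inr ⟨h1, h2⟩

lemma head?_dropZ {a : V} {l : List V} (h : l.head? = some a) (ha : a ∉ Z) :
    (dropZ Z l).head? = some a := by
  cases l with
  | nil => simp at h
  | cons b t =>
    have : b = a := by simpa using h
    subst this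
    rw [dropZ, if_neg ha]
    rfl

lemma getLast?_dropZ {e : V} : ∀ {l : List V}, l.getLast? = some e → e ∉ Z →
    (dropZ Z l).getLast? = some e
  | [], h, _ => by simp at h
  | [a], h, he => by
      have : a = e := by simpa using h
      subst this
      rw [dropZ, if_neg he]
      rfl
  | a :: b :: t, h, he => by
      rw [getLast?_cons_cons] at h
      have ih := getLast?_dropZ (l := b :: t) h he
      rw [dropZ]
      split
      · exact ih
      · rcases eq_or_ne (dropZ Z (b :: t)) [] with hnil | hnil
        · rw [hnil] at ih; simp at ih
        · rw [getLast?_cons_ne hnil]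
          exact ih


end Aux

section Aux2
variable {D : V → V → Prop} {W Z : Set V} {s : V}

lemma core (hWZ : W ∩ Z = ∅) (hsZ : s ∉ Z) (hcover : W ∪ {s} ∪ Z = Set.univ)
    (hnoarc : ∀ u ∈ W, ∀ v ∈ Z, ¬ D u v) :
    ∀ n (L : List V), L.length ≤ n → L.Chain' (Dtwo D W Z s) → L.Nodup →
      ((∀ a ∈ L.head?, a ∉ Z) → (dropZ Z L).Chain' (Dtwo D W Z s)) ∧
      (s ∉ L → (∀ a ∈ L.head?, a ∈ Z) → (s :: dropZ Z L).Chain' (Dtwo D W Z s)) := by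
  intro n
  induction n with
  | zero =>
    intro L hL _ _
    have : L = [] := eq_nil_of_length_eq_zero (Nat.le_zero.mp hL)
    subst this
    exact ⟨fun _ => by simp [dropZ], fun _ _ => isChain_singleton s⟩
  | succ n ih =>
    intro L hL hch hnd
    match L with
    | [] => exact ⟨fun _ => by simp [dropZ], fun _ _ => isChain_singleton s⟩
    | [a] =>
      constructor
      · intro hhead
        have ha : a ∉ Z := hhead a rfl
        rw [dropZ, if_neg ha]
        exact isChain_singleton a
      · intro _ hhead
        have ha : a ∈ Z := hhead a rfl
        rw [dropZ, if_pos ha, dropZ]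
        exact isChain_singleton s
    | a :: b :: t =>
      have h1 : Dtwo D W Z s a b := (chain'_cons.mp hch).1
      have h2 : (b :: t).Chain' (Dtwo D W Z s) := (chain'_cons.mp hch).2
      have hnd2 : (b :: t).Nodup := (nodup_cons.mp hnd).2
      have hlen2 : (b :: t).length ≤ n := by
        simp only [length_cons] at hL ⊢; omega
      have IH := ih (b :: t) hlen2 h2 hnd2
      constructor
      · intro hhead
        have ha : a ∉ Z := hhead a rfl
        rw [dropZ, if_neg ha]
        by_cases hb : b ∈ Z
        · have has : a = s := intoZ2 hWZ hcover hnoarc h1 hb ha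
          have hs2 : s ∉ b :: t := by
            rw [← has]; exact (nodup_cons.mp hnd).1
          have := IH.2 hs2 (by intro x hx; simp at hx; exact hx ▸ hb)
          rw [has]
          exact this
        · have hchain := IH.1 (by intro x hx; simp at hx; exact hx ▸ hb)
          rw [chain'_cons']
          refine ⟨?_, hchain⟩
          intro y hy
          have : (dropZ Z (b :: t)).head? = some b := head?_dropZ rfl hb
          rw [this] at hy
          simp at hy
          exact hy ▸ h1
      · intro hs hhead
        have ha : a ∈ Z := hhead a rfl
        rw [dropZ, if_pos ha]
        have hs2 : s ∉ b :: t := fun h => hs (mem_cons_of_mem _ h)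
        by_cases hb : b ∈ Z
        · exact IH.2 hs2 (by intro x hx; simp at hx; exact hx ▸ hb)
        · have hD : D a b := by
            rcases h1 with h | ⟨has, _⟩
            · exact h
            · exact absurd (has ▸ ha) hsZ
          have hbW : b ∈ W := by
            rcases mem_WS hcover hb with h | h
            · exact h
            · exact absurd (by simpa using h : b = s) (fun hbs => hs2 (hbs ▸ mem_cons_self))
          have hspec : Dtwo D W Z s s b := Or.inr ⟨rfl, hbW, a, ha, hD⟩
          have hchain := IH.1 (by intro x hx; simp at hx; exact hx ▸ hb)
          rw [chain'_cons']
          refine ⟨?_, hchain⟩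
          intro y hy
          have : (dropZ Z (b :: t)).head? = some b := head?_dropZ rfl hb
          rw [this] at hy
          simp at hy
          exact hy ▸ hspec

lemma finds (hWZ : W ∩ Z = ∅) (hcover : W ∪ {s} ∪ Z = Set.univ)
    (hnoarc : ∀ u ∈ W, ∀ v ∈ Z, ¬ D u v) :
    ∀ (L : List V), L.Chain' (Dtwo D W Z s) → (∀ a ∈ L.head?, a ∉ Z) →
      ∀ z ∈ L, z ∈ Z → s ∈ L
  | [], _, _, z, hz, _ => by simp at hz
  | [a], _, hhead, z, hz, hzZ => by
      simp at hz
      exact absurd (hz ▸ hzZ) (hhead a rfl)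
  | a :: b :: t, hch, hhead, z, hz, hzZ => by
      have ha : a ∉ Z := hhead a rfl
      have h1 : Dtwo D W Z s a b := (chain'_cons.mp hch).1
      by_cases hb : b ∈ Z
      · have : a = s := intoZ2 hWZ hcover hnoarc h1 hb ha
        exact this ▸ mem_cons_self
      · have hzt : z ∈ b :: t := by
          rcases mem_cons.mp hz with rfl | h
          · exact absurd hzZ ha
          · exact h
        have := finds hWZ hcover hnoarc (b :: t) (chain'_cons.mp hch).2
          (by intro x hx; simp at hx; exact hx ▸ hb) z hzt hzZ
        exact mem_cons_of_mem _ this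

lemma allZ (hWZ : W ∩ Z = ∅) (hcover : W ∪ {s} ∪ Z = Set.univ)
    (hnoarc : ∀ u ∈ W, ∀ v ∈ Z, ¬ D u v) :
    ∀ (L : List V), L.Chain' (Dtwo D W Z s) → s ∉ L → (∀ e ∈ L.getLast?, e ∈ Z) →
      ∀ b ∈ L, b ∈ Z
  | [], _, _, _, b, hb => by simp at hb
  | [a], _, _, hlast, b, hb => by
      simp at hb
      exact hb ▸ hlast a rfl
  | a :: c :: t, hch, hs, hlast, b, hb => by
      have ih := allZ hWZ hcover hnoarc (c :: t) (chain'_cons.mp hch).2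
        (fun h => hs (mem_cons_of_mem _ h)) (by rwa [getLast?_cons_cons] at hlast)
      rcases mem_cons.mp hb with rfl | h
      · have hc : c ∈ Z := ih c (mem_cons_self)
        by_contra hbZ
        have : b = s := intoZ2 hWZ hcover hnoarc (chain'_cons.mp hch).1 hc hbZ
        exact hs (this ▸ mem_cons_self)
      · exact ih b h

end Aux2

section Aux3
variable {D : V → V → Prop} {W Z : Set V} {s : V}

open Classical in
noncomputable def cutAt (C : List V) : List V → List V
  | [] => []
  | a :: t => if a ∈ C then [a] else a :: cutAt C t

lemma cutAt_prefix (C : List V) : ∀ l : List V, cutAt C l <+: l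
  | [] => by simp [cutAt]
  | a :: t => by
      rw [cutAt]
      split
      · exact ⟨t, rfl⟩
      · exact (cons_prefix_cons).mpr ⟨rfl, cutAt_prefix C t⟩

lemma head?_cutAt (C : List V) : ∀ l : List V, (cutAt C l).head? = l.head?
  | [] => rfl
  | a :: t => by rw [cutAt]; split <;> rfl

lemma cutAt_ne_nil (C : List V) {l : List V} (h : l ≠ []) : cutAt C l ≠ [] := by
  cases l with
  | nil => exact absurd rfl h
  | cons a t => rw [cutAt]; split <;> simp

lemma getLast?_cutAt_mem (C : List V) : ∀ l : List V, (∀ a ∈ l.getLast?, a ∈ C) →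
    l ≠ [] → ∀ a ∈ (cutAt C l).getLast?, a ∈ C
  | [], _, h, _, _ => absurd rfl h
  | [a], hlast, _, b, hb => by
      by_cases haC : a ∈ C
      · rw [cutAt, if_pos haC] at hb
        simp at hb; subst hb; exact haC
      · rw [cutAt, if_neg haC] at hb
        simp [cutAt] at hb
        subst hb
        exact absurd (hlast a rfl) haC
  | a :: c :: t, hlast, _, b, hb => by
      by_cases haC : a ∈ C
      · rw [cutAt, if_pos haC] at hb
        simp at hb; subst hb; exact haC
      · rw [cutAt, if_neg haC] at hb
        rw [getLast?_cons_ne (cutAt_ne_nil C (cons_ne_nil c t))] at hb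
        exact getLast?_cutAt_mem C (c :: t) (by rwa [getLast?_cons_cons] at hlast)
          (cons_ne_nil c t) b hb

lemma cutAt_stop (C : List V) : ∀ l : List V, ∀ z ∈ cutAt C l, z ∈ C →
    (cutAt C l).getLast? = some z
  | [], z, hz, _ => by simp [cutAt] at hz
  | a :: t, z, hz, hzC => by
      by_cases haC : a ∈ C
      · rw [cutAt, if_pos haC] at hz ⊢
        simp at hz
        subst hz
        rfl
      · rw [cutAt, if_neg haC] at hz ⊢
        rcases mem_cons.mp hz with rfl | hz'
        · exact absurd hzC haC
        · have hrec := cutAt_stop C t z hz' hzC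
          rw [getLast?_cons_ne ?_]
          · exact hrec
          · intro h; rw [h] at hz'; simp at hz'

lemma rot {R : V → V → Prop} {C : List V} {a : V}
    (hC : 2 ≤ C.length ∧ C.Nodup ∧ C.Chain' R ∧
      ∃ e ∈ C.getLast?, ∃ h ∈ C.head?, R e h) (ha : a ∈ C) :
    ∃ B : List V, (2 ≤ (a :: B).length ∧ (a :: B).Nodup ∧ (a :: B).Chain' R ∧
      ∃ e ∈ (a :: B).getLast?, ∃ h ∈ (a :: B).head?, R e h) ∧
      (∀ x, x ∈ a :: B ↔ x ∈ C) := by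
  obtain ⟨A, B, rfl⟩ := append_of_mem ha
  obtain ⟨hlen, hnd, hch, e, he, hh, hhm, harc⟩ := hC
  cases A with
  | nil =>
    exact ⟨B, ⟨hlen, hnd, hch, e, he, hh, hhm, harc⟩, fun x => by simp⟩
  | cons a0 A' =>
    have hperm : ((a :: B) ++ (a0 :: A')).Perm ((a0 :: A') ++ a :: B) := perm_append_comm
    refine ⟨B ++ (a0 :: A'), ?_, ?_⟩
    swap
    · intro x
      constructor
      · intro hx
        exact (hperm.mem_iff).mp (by simpa using hx)
      · intro hx
        simpa using (hperm.symm.mem_iff).mp hx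
    rw [chain'_append] at hch
    obtain ⟨cA, cB, linkA⟩ := hch
    have hAne : (a0 :: A') ≠ [] := cons_ne_nil _ _
    have hlastA : (a0 :: A').getLast? = some ((a0 :: A').getLast hAne) :=
      getLast?_eq_getLast (l := _) hAne
    have hlastC : ((a0 :: A') ++ a :: B).getLast? = (a :: B).getLast? := by
      rw [getLast?_append, getLast?_eq_getLast (l := (a :: B)) (cons_ne_nil a B)]
      rfl
    have he' : (a :: B).getLast? = some e := by
      rw [Option.mem_def, hlastC] at he
      exact he
    have hhm' : some a0 = some hh := by
      rw [Option.mem_def, head?_append] at hhm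
      exact hhm
    have ha0 : a0 = hh := by injection hhm'
    constructor
    · simp only [length_cons, length_append] at hlen ⊢
      omega
    refine ⟨?_, ?_, ?_⟩
    · have : ((a :: B) ++ (a0 :: A')).Nodup := hperm.nodup_iff.mpr hnd
      simpa using this
    · have : Chain' R ((a :: B) ++ (a0 :: A')) := by
        rw [chain'_append]
        refine ⟨cB, cA, ?_⟩
        intro x hx y hy
        rw [Option.mem_def, he'] at hx
        injection hx with hx
        have hy' : a0 = y := by simpa using hy
        subst hx
        rw [← hy', ha0]
        exact harc
      simpa using this
    · refine ⟨(a0 :: A').getLast hAne, ?_, a, rfl, ?_⟩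
      · show (a :: (B ++ (a0 :: A'))).getLast? = some ((a0 :: A').getLast hAne)
        have heq : (a :: (B ++ (a0 :: A'))) = (a :: B) ++ (a0 :: A') := by simp
        rw [heq, getLast?_append, hlastA]
        rfl
      · exact linkA ((a0 :: A').getLast hAne) hlastA a rfl

end Aux3

section Aux4
variable {D : V → V → Prop} {W Z : Set V} {s : V}

lemma dedup_path {R : V → V → Prop} :
    ∀ n (l : List V), l.length ≤ n → l ≠ [] → l.Chain' R →
    ∃ m : List V, m ≠ [] ∧ m.Chain' R ∧ m.Nodup ∧ m.head? = l.head? ∧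
      m.getLast? = l.getLast? ∧ ∀ x ∈ m, x ∈ l := by
  intro n
  induction n with
  | zero =>
    intro l hl hne _
    exact absurd (eq_nil_of_length_eq_zero (Nat.le_zero.mp hl)) hne
  | succ n ih =>
    intro l hl hne hch
    match l with
    | a :: t =>
      by_cases hat : a ∈ t
      · obtain ⟨B, T, hBT⟩ := append_of_mem hat
        have htch : t.Chain' R := hch.tail
        have hchT : (a :: T).Chain' R := by
          rw [hBT] at htch
          exact (chain'_append.mp htch).2.1
        have hlenT : (a :: T).length ≤ n := by
          have : t.length = B.length + (a :: T).length := by rw [hBT]; simp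
          simp only [length_cons] at hl ⊢
          simp only [length_cons] at this
          omega
        obtain ⟨m, hm1, hm2, hm3, hm4, hm5, hm6⟩ :=
          ih (a :: T) hlenT (cons_ne_nil _ _) hchT
        refine ⟨m, hm1, hm2, hm3, ?_, ?_, ?_⟩
        · rw [hm4]; rfl
        · have e1 : (a :: t).getLast? = t.getLast? :=
            getLast?_cons_ne (by rw [hBT]; simp)
          have e2 : t.getLast? = (a :: T).getLast? := by
            rw [hBT, getLast?_append, getLast?_eq_getLast (l := (a :: T)) (cons_ne_nil _ _)]
            rfl
          rw [hm5, e1, e2]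
        · intro x hx
          have := hm6 x hx
          rcases mem_cons.mp this with rfl | hxT
          · exact mem_cons_self
          · exact mem_cons_of_mem _ (by rw [hBT]; exact mem_append_right B (mem_cons_of_mem _ hxT))
      · cases t with
        | nil =>
          exact ⟨[a], cons_ne_nil _ _, isChain_singleton a, nodup_singleton a, rfl, rfl,
            fun x hx => hx⟩
        | cons b t' =>
          obtain ⟨m, hm1, hm2, hm3, hm4, hm5, hm6⟩ :=
            ih (b :: t') (by simp only [length_cons] at hl ⊢; omega) (cons_ne_nil _ _) hch.tail
          refine ⟨a :: m, cons_ne_nil _ _, ?_, ?_, rfl, ?_, ?_⟩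
          · rw [chain'_cons']
            refine ⟨?_, hm2⟩
            intro y hy
            rw [Option.mem_def, hm4] at hy
            have : b = y := by simpa using hy
            subst this
            exact (chain'_cons.mp hch).1
          · rw [nodup_cons]
            exact ⟨fun h => hat (hm6 a h), hm3⟩
          · rw [getLast?_cons_ne hm1, hm5, getLast?_cons_ne (cons_ne_nil _ _)]
          · intro x hx
            rcases mem_cons.mp hx with rfl | hx'
            · exact mem_cons_self
            · exact mem_cons_of_mem _ (hm6 x hx')

lemma reach_list {R : V → V → Prop} {a b : V} (h : Relation.ReflTransGen R a b) :
    ∃ f : List V, f ≠ [] ∧ f.Chain' R ∧ f.head? = some a ∧ f.getLast? = some b := by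
  obtain ⟨l, hc, hlast⟩ := List.exists_isChain_cons_of_relationReflTransGen h
  refine ⟨a :: l, cons_ne_nil _ _, hc, rfl, ?_⟩
  rw [getLast?_eq_getLast (l := (a :: l)) (cons_ne_nil _ _)]
  exact congrArg some hlast

lemma back (hWZ : W ∩ Z = ∅) (hcover : W ∪ {s} ∪ Z = Set.univ)
    (hnoarc : ∀ u ∈ W, ∀ v ∈ Z, ¬ D u v) :
    ∀ n (f : List V), f.length ≤ n → f.Chain' D → (∀ e ∈ f.getLast?, e ∈ Z) →
    (∃ a ∈ f, a ∉ Z) →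
    ∃ m : List V, m ≠ [] ∧ (∀ x ∈ m, x ∈ Z) ∧ (s :: m).Chain' D ∧
      m.getLast? = f.getLast? := by
  intro n
  induction n with
  | zero =>
    intro f hf _ _ hex
    obtain ⟨a, ha, _⟩ := hex
    rw [eq_nil_of_length_eq_zero (Nat.le_zero.mp hf)] at ha
    simp at ha
  | succ n ih =>
    intro f hf hch hlast hex
    match f with
    | [] => obtain ⟨a, ha, _⟩ := hex; simp at ha
    | [a] =>
      obtain ⟨x, hx, hxZ⟩ := hex
      simp at hx
      subst hx
      exact absurd (hlast x rfl) hxZ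
    | a :: b :: t =>
      by_cases hbt : ∃ x ∈ b :: t, x ∉ Z
      · obtain ⟨m, h1, h2, h3, h4⟩ := ih (b :: t) (by simp only [length_cons] at hf ⊢; omega)
          hch.tail (by rwa [getLast?_cons_cons] at hlast) hbt
        exact ⟨m, h1, h2, h3, by rw [h4, getLast?_cons_cons]⟩
      · push_neg at hbt
        obtain ⟨x, hx, hxZ⟩ := hex
        have haZ : a ∉ Z := by
          rcases mem_cons.mp hx with rfl | hx'
          · exact hxZ
          · exact absurd (hbt x hx') hxZ
        have hbZ : b ∈ Z := hbt b (mem_cons_self)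
        have has : a = s := by
          have harc : D a b := (chain'_cons.mp hch).1
          rcases Set.mem_union _ _ _ |>.mp (mem_WS hcover haZ) with haW | has
          · exact absurd harc (hnoarc a haW b hbZ)
          · simpa using has
        refine ⟨b :: t, cons_ne_nil _ _, hbt, ?_, by rw [getLast?_cons_cons]⟩
        rw [← has]
        exact hch

lemma pathZ (hWZ : W ∩ Z = ∅) (hsZ : s ∉ Z) (hcover : W ∪ {s} ∪ Z = Set.univ)
    (hnoarc : ∀ u ∈ W, ∀ v ∈ Z, ¬ D u v)
    (hreachsz : Relation.ReflTransGen D s z) (hz : z ∈ Z) :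
    ∃ m : List V, m ≠ [] ∧ (∀ x ∈ m, x ∈ Z) ∧ (s :: m).Chain' D ∧
      (s :: m).Nodup ∧ m.getLast? = some z := by
  obtain ⟨f, hf1, hf2, hf3, hf4⟩ := reach_list hreachsz
  have hex : ∃ a ∈ f, a ∉ Z := ⟨s, mem_of_mem_head? (by rw [hf3]; rfl), hsZ⟩
  obtain ⟨m0, hm1, hm2, hm3, hm4⟩ := back hWZ hcover hnoarc f.length f le_rfl hf2
    (by intro e he; rw [Option.mem_def, hf4] at he; injection he with he; exact he ▸ hz) hex
  have hm4' : m0.getLast? = some z := by rw [hm4, hf4]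
  obtain ⟨m', hn1, hn2, hn3, hn4, hn5, hn6⟩ :=
    dedup_path (s :: m0).length (s :: m0) le_rfl (cons_ne_nil _ _) hm3
  have hhead : m'.head? = some s := by rw [hn4]; rfl
  match m' with
  | [] => exact absurd rfl hn1
  | c :: r =>
    have hcs : c = s := by simpa using hhead
    subst hcs
    have hrZ : ∀ x ∈ r, x ∈ Z := by
      intro x hx
      have hxm : x ∈ c :: m0 := by
        have := hn6 x (mem_cons_of_mem _ hx)
        simpa using this
      rcases mem_cons.mp hxm with rfl | hx'
      · exact absurd hx (nodup_cons.mp hn3).1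
      · exact hm2 x hx'
    have hrne : r ≠ [] := by
      intro h
      subst h
      have : (c :: ([] : List V)).getLast? = some z := by
        rw [hn5, getLast?_cons_ne hm1, hm4']
      have : c = z := by simpa using this
      exact hsZ (this ▸ hz)
    refine ⟨r, hrne, hrZ, hn2, hn3, ?_⟩
    rw [← getLast?_cons_ne hrne (a := c), hn5, getLast?_cons_ne hm1, hm4']

end Aux4

section Aux5
variable {D : V → V → Prop} {W Z : Set V} {s : V}

lemma verts_d1 (hsW : s ∉ W) :
    ∀ l : List V, l.Chain' (Done D W Z s) → 2 ≤ l.length → ∀ v ∈ l, v ∈ W ∪ {s}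
  | a :: b :: t, hch, _, v, hv => by
    have harc : Done D W Z s a b := (chain'_cons.mp hch).1
    have hab : a ∈ W ∪ {s} ∧ b ∈ W ∪ {s} := by
      rcases harc with ⟨_, h1, h2⟩ | ⟨rfl, hbW, _⟩
      · exact ⟨h1, h2⟩
      · exact ⟨Or.inr rfl, Or.inl hbW⟩
    rcases mem_cons.mp hv with rfl | hv'
    · exact hab.1
    · cases t with
      | nil =>
        have : v = b := by simpa using hv'
        exact this ▸ hab.2
      | cons c t' =>
        exact verts_d1 hsW (b :: c :: t') (chain'_cons.mp hch).2 (by simp [Nat.le_add_left]) v hv'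
  | [], _, h, _, _ => by simp at h
  | [a], _, h, _, _ => by simp at h

lemma lfix (hWZ : W ∩ Z = ∅) (hsZ : s ∉ Z) (hcover : W ∪ {s} ∪ Z = Set.univ)
    (hnoarc : ∀ u ∈ W, ∀ v ∈ Z, ¬ D u v)
    (hstrong : ∀ u v : V, Relation.ReflTransGen D u v) :
    ∀ n (L : List V), L.length ≤ n → L.Chain' (Done D W Z s) → L.Nodup →
    (∀ x ∈ L, x ∈ W ∪ {s}) →
    ∃ L' : List V, L'.Chain' D ∧ L'.Nodup ∧ L'.head? = L.head? ∧
      L'.getLast? = L.getLast? ∧ (∀ x ∈ L, x ∈ L') ∧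
      (∀ x ∈ L', x ∈ L ∨ (x ∈ Z ∧ s ∈ L.dropLast)) ∧
      (s ∉ L.dropLast → L' = L) := by
  intro n
  induction n with
  | zero =>
    intro L hL _ _ _
    rw [eq_nil_of_length_eq_zero (Nat.le_zero.mp hL)]
    exact ⟨[], isChain_nil, nodup_nil, rfl, rfl, by simp, by simp, fun _ => rfl⟩
  | succ n ih =>
    intro L hL hch hnd hmem
    match L with
    | [] => exact ⟨[], isChain_nil, nodup_nil, rfl, rfl, by simp, by simp, fun _ => rfl⟩
    | [a] =>
      exact ⟨[a], isChain_singleton a, nodup_singleton a, rfl, rfl, by simp, by simp,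
        fun _ => rfl⟩
    | a :: b :: t =>
      have h1 : Done D W Z s a b := (chain'_cons.mp hch).1
      have h2 : (b :: t).Chain' (Done D W Z s) := (chain'_cons.mp hch).2
      obtain ⟨T', hT1, hT2, hT3, hT4, hT5, hT6, hT7⟩ :=
        ih (b :: t) (by simp only [length_cons] at hL ⊢; omega) h2 (nodup_cons.mp hnd).2
          (fun x hx => hmem x (mem_cons_of_mem _ hx))
      have hTne : T' ≠ [] := by
        intro h; rw [h] at hT3; simp at hT3
      have hanbt : a ∉ b :: t := (nodup_cons.mp hnd).1
      have hTsub : ∀ x ∈ T', x ∈ b :: t ∨ (x ∈ Z ∧ s ∈ (b :: t).dropLast) := hT6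
      have hdropL : (a :: b :: t).dropLast = a :: (b :: t).dropLast := by
        simp [dropLast_cons₂]
      rcases h1 with ⟨hDab, _, _⟩ | ⟨has, hbW, z, hzZ, hDzb⟩
      · -- ordinary arc
        refine ⟨a :: T', ?_, ?_, rfl, ?_, ?_, ?_, ?_⟩
        · rw [chain'_cons']
          refine ⟨?_, hT1⟩
          intro y hy
          rw [Option.mem_def, hT3] at hy
          have : b = y := by simpa using hy
          exact this ▸ hDab
        · rw [nodup_cons]
          refine ⟨?_, hT2⟩
          intro haT
          rcases hTsub a haT with h | ⟨haZ, _⟩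
          · exact hanbt h
          · rcases hmem a (mem_cons_self) with h | h
            · exact absurd (Set.mem_inter h haZ) (by rw [hWZ]; exact fun h => h.elim)
            · exact hsZ ((by simpa using h : a = s) ▸ haZ)
        · rw [getLast?_cons_ne hTne, hT4, getLast?_cons_ne (cons_ne_nil _ _)]
        · intro x hx
          rcases mem_cons.mp hx with rfl | hx'
          · exact mem_cons_self
          · exact mem_cons_of_mem _ (hT5 x hx')
        · intro x hx
          rcases mem_cons.mp hx with rfl | hx'
          · exact Or.inl (mem_cons_self)
          · rcases hTsub x hx' with h | ⟨hxZ, hs⟩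
            · exact Or.inl (mem_cons_of_mem _ h)
            · exact Or.inr ⟨hxZ, by rw [hdropL]; exact mem_cons_of_mem _ hs⟩
        · intro hs
          rw [hdropL] at hs
          have : T' = b :: t := hT7 (fun h => hs (mem_cons_of_mem _ h))
          rw [this]
      · -- special arc from s to b
        have has' := has.symm
        subst has'
        obtain ⟨m, hm1, hm2, hm3, hm4, hm5⟩ := pathZ hWZ hsZ hcover hnoarc (hstrong s z) hzZ
        have hTbt : ∀ x ∈ T', x ∈ b :: t := by
          intro x hx
          rcases hTsub x hx with h | ⟨_, hsdrop⟩
          · exact h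
          · exact absurd (dropLast_sublist (b :: t) |>.mem hsdrop) hanbt
        have hsdropL : s ∈ (s :: b :: t).dropLast := by
          rw [hdropL]; exact mem_cons_self
        refine ⟨s :: m ++ T', ?_, ?_, rfl, ?_, ?_, ?_, ?_⟩
        · have : (s :: m) ++ T' = s :: m ++ T' := rfl
          rw [← this, chain'_append]
          refine ⟨hm3, ?_, ?_⟩
          · exact chain'_imp_mem hT1 (fun x _ y _ h => h)
          · intro x hx y hy
            rw [Option.mem_def, getLast?_cons_ne hm1, hm5] at hx
            injection hx with hx
            rw [Option.mem_def, hT3] at hy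
            have hyb : b = y := by simpa using hy
            subst hx
            exact hyb ▸ hDzb
        · have : ((s :: m) ++ T').Nodup := by
            rw [nodup_append']
            refine ⟨hm4, hT2, ?_⟩
            intro x hx hxT
            have hxbt : x ∈ b :: t := hTbt x hxT
            have hxWS : x ∈ W ∪ {s} := hmem x (mem_cons_of_mem _ hxbt)
            rcases mem_cons.mp hx with rfl | hxm
            · exact hanbt hxbt
            · have hxZ : x ∈ Z := hm2 x hxm
              rcases hxWS with h | h
              · exact absurd (Set.mem_inter h hxZ) (by rw [hWZ]; exact fun h => h.elim)
              · exact hsZ ((by simpa using h : x = s) ▸ hxZ)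
          simpa using this
        · have : (s :: m ++ T') = (s :: m) ++ T' := rfl
          rw [this, getLast?_append, hT4]
          rw [getLast?_eq_getLast (l := (b :: t)) (cons_ne_nil _ _)]
          rw [getLast?_cons_ne (cons_ne_nil _ _)]
          rw [getLast?_eq_getLast (l := (b :: t)) (cons_ne_nil _ _)]
          rfl
        · intro x hx
          rcases mem_cons.mp hx with rfl | hx'
          · exact mem_cons_self
          · exact mem_cons_of_mem _ (mem_append_right m (hT5 x hx'))
        · intro x hx
          rcases mem_cons.mp hx with rfl | hx'
          · exact Or.inl (mem_cons_self)
          · rcases mem_append.mp hx' with hxm | hxT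
            · exact Or.inr ⟨hm2 x hxm, hsdropL⟩
            · exact Or.inl (mem_cons_of_mem _ (hTbt x hxT))
        · intro hs
          exact absurd hsdropL hs

end Aux5

/-- transfer of `X`-tripods through a 1-separation. -/
theorem tripod_one_separation (D : V → V → Prop)
    (hstrong : ∀ u v : V, Reach D u v)
    (W Z : Set V) (s : V)
    (hsW : s ∉ W) (hsZ : s ∉ Z) (hWZ : W ∩ Z = ∅)
    (hcover : W ∪ {s} ∪ Z = Set.univ)
    (x1 x2 x3 : V) (h12 : x1 ≠ x2) (h13 : x1 ≠ x3) (h23 : x2 ≠ x3)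
    (y1 y2 y3 : V)
    (hX : ({x1, x2, x3} : Set V) ⊆ W ∪ {s})
    (hY : ({y1, y2, y3} : Set V) ⊆ Z ∪ {s})
    (hreach : ∀ w ∈ W, ∃ x ∈ ({x1, x2, x3} : Set V) \ {s}, ReachIn D W x w)
    (hnoarc : ∀ u ∈ W, ∀ v ∈ Z, ¬ D u v) :
    (∃ C P1 P2 P3 : List V, IsTripod D x1 x2 x3 C P1 P2 P3) ↔
    (∃ C P1 P2 P3 : List V,
      IsTripod (fun u v =>
          restrict D (W ∪ {s}) u v ∨ (u = s ∧ v ∈ W ∧ ∃ z ∈ Z, D z v))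
        x1 x2 x3 C P1 P2 P3) := by
  clear hY hreach
  have hcov := hcover
  have WS_not_Z : ∀ v : V, v ∈ W ∪ {s} → v ∉ Z := by
    intro v hv hvZ
    rcases hv with h | h
    · exact absurd (Set.mem_inter h hvZ) (by rw [hWZ]; exact fun h => h.elim)
    · exact hsZ ((by simpa using h : v = s) ▸ hvZ)
  have hx1WS : x1 ∈ W ∪ {s} := hX (by simp)
  have hx2WS : x2 ∈ W ∪ {s} := hX (by simp)
  have hx3WS : x3 ∈ W ∪ {s} := hX (by simp)
  have conv : ∀ l : List V, l.Chain' (Dtwo D W Z s) → (∀ v ∈ l, v ∉ Z) →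
      l.Chain' (Done D W Z s) := by
    intro l hch hl
    exact chain'_imp_mem hch (fun a ha b hb h => D2toD1 hcover h (hl a ha) (hl b hb))
  constructor
  · -- forward direction
    rintro ⟨C, P1, P2, P3, hT⟩
    obtain ⟨hC, hP1, hP2, hP3, hh1, hh2, hh3, hl1, hl2, hl3, hd12, hd13, hd23⟩ := hT
    obtain ⟨hClen, hCnd, hCch, eC, heC, hC0, hC0m, hCarc⟩ := hC
    -- unfold the legs
    have cutprop : ∀ (P : List V) (x : V), IsDipath D P → P.head? = some x →
        (∀ a ∈ P.getLast?, a ∈ C) →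
        (cutAt C P) ≠ [] ∧ (cutAt C P).Chain' D ∧ (cutAt C P).Nodup ∧
        (cutAt C P).head? = some x ∧ (∀ a ∈ (cutAt C P).getLast?, a ∈ C) ∧
        (∀ z ∈ cutAt C P, z ∈ C → (cutAt C P).getLast? = some z) ∧
        (∀ z ∈ cutAt C P, z ∈ P) := by
      intro P x hP hh hl
      obtain ⟨hne, hch, hnd⟩ := hP
      refine ⟨cutAt_ne_nil C hne, hch.prefix (cutAt_prefix C P),
        ((cutAt_prefix C P).sublist).nodup hnd, by rw [head?_cutAt, hh],
        getLast?_cutAt_mem C P hl hne, cutAt_stop C P,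
        fun z hz => ((cutAt_prefix C P).sublist).mem hz⟩
    obtain ⟨hQ1ne, hQ1ch, hQ1nd, hQ1h, hQ1l, hQ1stop, hQ1sub⟩ := cutprop P1 x1 hP1 hh1 hl1
    obtain ⟨hQ2ne, hQ2ch, hQ2nd, hQ2h, hQ2l, hQ2stop, hQ2sub⟩ := cutprop P2 x2 hP2 hh2 hl2
    obtain ⟨hQ3ne, hQ3ch, hQ3nd, hQ3h, hQ3l, hQ3stop, hQ3sub⟩ := cutprop P3 x3 hP3 hh3 hl3
    set Q1 := cutAt C P1 with hQ1def
    set Q2 := cutAt C P2 with hQ2def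
    set Q3 := cutAt C P3 with hQ3def
    have hQd12 : ∀ z ∈ Q1, z ∉ Q2 := fun z hz hz2 => hd12 z (hQ1sub z hz) (hQ2sub z hz2)
    have hQd13 : ∀ z ∈ Q1, z ∉ Q3 := fun z hz hz2 => hd13 z (hQ1sub z hz) (hQ3sub z hz2)
    have hQd23 : ∀ z ∈ Q2, z ∉ Q3 := fun z hz hz2 => hd23 z (hQ2sub z hz) (hQ3sub z hz2)
    -- move to the augmented digraph D2
    have hCch2 : C.Chain' (Dtwo D W Z s) := hCch.imp (fun a b h => Or.inl h)
    have hC2 : 2 ≤ C.length ∧ C.Nodup ∧ C.Chain' (Dtwo D W Z s) ∧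
        ∃ e ∈ C.getLast?, ∃ h ∈ C.head?, Dtwo D W Z s e h :=
      ⟨hClen, hCnd, hCch2, eC, heC, hC0, hC0m, Or.inl hCarc⟩
    have hQ1ch2 : Q1.Chain' (Dtwo D W Z s) := hQ1ch.imp (fun a b h => Or.inl h)
    have hQ2ch2 : Q2.Chain' (Dtwo D W Z s) := hQ2ch.imp (fun a b h => Or.inl h)
    have hQ3ch2 : Q3.Chain' (Dtwo D W Z s) := hQ3ch.imp (fun a b h => Or.inl h)
    have hx1Z : x1 ∉ Z := WS_not_Z x1 hx1WS
    have hx2Z : x2 ∉ Z := WS_not_Z x2 hx2WS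
    have hx3Z : x3 ∉ Z := WS_not_Z x3 hx3WS
    -- if C has a Z-vertex and a non-Z-vertex then s ∈ C
    have hsCof : (∃ u ∈ C, u ∉ Z) → (∃ z ∈ C, z ∈ Z) → s ∈ C := by
      rintro ⟨u, hu, huZ⟩ ⟨z, hz, hzZ⟩
      obtain ⟨B, hB, hmemB⟩ := rot hC2 hu
      have : s ∈ u :: B := by
        refine finds hWZ hcover hnoarc (u :: B) hB.2.2.1 ?_ z ((hmemB z).mpr hz) hzZ
        intro a ha
        have : u = a := by simpa using ha
        exact this ▸ huZ
      exact (hmemB s).mp this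
    have hlegS : ∀ (Q : List V) (x : V), Q.Chain' (Dtwo D W Z s) → Q.head? = some x →
        x ∉ Z → ∀ a ∈ Q.getLast?, a ∈ Z → s ∈ Q := by
      intro Q x hch hh hxZ a ha haZ
      refine finds hWZ hcover hnoarc Q hch ?_ a (mem_of_mem_getLast? ha) haZ
      intro b hb
      rw [Option.mem_def, hh] at hb
      injection hb with hb
      exact hb ▸ hxZ
    -- C is not entirely inside Z
    have hQlast : ∀ (Q : List V), Q ≠ [] → ∃ a, Q.getLast? = some a :=
      fun Q hne => ⟨_, getLast?_eq_getLast (l := _) hne⟩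
    have hCnotallZ : ¬ (∀ u ∈ C, u ∈ Z) := by
      intro hallZ
      obtain ⟨a1, ha1⟩ := hQlast Q1 hQ1ne
      obtain ⟨a2, ha2⟩ := hQlast Q2 hQ2ne
      have hsQ1 : s ∈ Q1 := hlegS Q1 x1 hQ1ch2 hQ1h hx1Z a1 ha1 (hallZ a1 (hQ1l a1 ha1))
      have hsQ2 : s ∈ Q2 := hlegS Q2 x2 hQ2ch2 hQ2h hx2Z a2 ha2 (hallZ a2 (hQ2l a2 ha2))
      exact hQd12 s hsQ1 hsQ2
    -- every leg ends outside Z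
    have legLast : ∀ (Q : List V) (x : V), Q.Chain' (Dtwo D W Z s) → Q.head? = some x →
        x ∉ Z → (∀ a ∈ Q.getLast?, a ∈ C) → (∀ z ∈ Q, z ∈ C → Q.getLast? = some z) →
        ∀ a ∈ Q.getLast?, a ∉ Z := by
      intro Q x hch hh hxZ hlC hstop a ha haZ
      have haC : a ∈ C := hlC a ha
      have hex : ∃ u ∈ C, u ∉ Z := by
        by_contra hcon
        push_neg at hcon
        exact hCnotallZ fun u hu => hcon u hu
      have hsC : s ∈ C := hsCof hex ⟨a, haC, haZ⟩
      have hsQ : s ∈ Q := hlegS Q x hch hh hxZ a ha haZ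
      have := hstop s hsQ hsC
      rw [Option.mem_def, this] at ha
      injection ha with ha
      exact hsZ (ha ▸ haZ)
    have hLL1 := legLast Q1 x1 hQ1ch2 hQ1h hx1Z hQ1l hQ1stop
    have hLL2 := legLast Q2 x2 hQ2ch2 hQ2h hx2Z hQ2l hQ2stop
    have hLL3 := legLast Q3 x3 hQ3ch2 hQ3h hx3Z hQ3l hQ3stop
    -- the filtered legs
    have legfix : ∀ (Q : List V) (x : V), Q.Chain' (Dtwo D W Z s) → Q.Nodup →
        Q.head? = some x → x ∉ Z → (∀ a ∈ Q.getLast?, a ∉ Z) → Q ≠ [] →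
        (dropZ Z Q) ≠ [] ∧ (dropZ Z Q).Chain' (Done D W Z s) ∧ (dropZ Z Q).Nodup ∧
        (dropZ Z Q).head? = some x ∧ (dropZ Z Q).getLast? = Q.getLast? ∧
        (∀ v ∈ dropZ Z Q, v ∈ Q) := by
      intro Q x hch hnd hh hxZ hlZ hne
      have hch2 : (dropZ Z Q).Chain' (Dtwo D W Z s) := by
        refine (core hWZ hsZ hcover hnoarc Q.length Q le_rfl hch hnd).1 ?_
        intro a ha
        rw [Option.mem_def, hh] at ha
        injection ha with ha
        exact ha ▸ hxZ
      obtain ⟨a, ha⟩ := hQlast Q hne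
      have hlast : (dropZ Z Q).getLast? = some a := getLast?_dropZ ha (hlZ a ha)
      have hhd : (dropZ Z Q).head? = some x := head?_dropZ hh hxZ
      refine ⟨?_, ?_, (dropZ_sublist Q).nodup hnd, hhd, by rw [hlast, ha], ?_⟩
      · intro hcon; rw [hcon] at hhd; simp at hhd
      · exact conv _ hch2 (fun v hv => (mem_dropZ.mp hv).2)
      · exact fun v hv => (mem_dropZ.mp hv).1
    obtain ⟨hL1ne, hL1ch, hL1nd, hL1h, hL1l, hL1sub⟩ :=
      legfix Q1 x1 hQ1ch2 hQ1nd hQ1h hx1Z hLL1 hQ1ne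
    obtain ⟨hL2ne, hL2ch, hL2nd, hL2h, hL2l, hL2sub⟩ :=
      legfix Q2 x2 hQ2ch2 hQ2nd hQ2h hx2Z hLL2 hQ2ne
    obtain ⟨hL3ne, hL3ch, hL3nd, hL3h, hL3l, hL3sub⟩ :=
      legfix Q3 x3 hQ3ch2 hQ3nd hQ3h hx3Z hLL3 hQ3ne
    have hLd12 : ∀ z ∈ dropZ Z Q1, z ∉ dropZ Z Q2 :=
      fun z hz hz2 => hQd12 z (hL1sub z hz) (hL2sub z hz2)
    have hLd13 : ∀ z ∈ dropZ Z Q1, z ∉ dropZ Z Q3 :=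
      fun z hz hz2 => hQd13 z (hL1sub z hz) (hL3sub z hz2)
    have hLd23 : ∀ z ∈ dropZ Z Q2, z ∉ dropZ Z Q3 :=
      fun z hz hz2 => hQd23 z (hL2sub z hz) (hL3sub z hz2)
    by_cases hCZ : ∃ z ∈ C, z ∈ Z
    · -- C meets Z : rotate C at s and filter
      obtain ⟨z0, hz0C, hz0Z⟩ := hCZ
      have hexu : ∃ u ∈ C, u ∉ Z := by
        obtain ⟨a1, ha1⟩ := hQlast Q1 hQ1ne
        exact ⟨a1, hQ1l a1 ha1, hLL1 a1 ha1⟩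
      have hsC : s ∈ C := hsCof hexu ⟨z0, hz0C, hz0Z⟩
      obtain ⟨B, ⟨hlenB, hndB, hchB, e, heB, hB0, hB0m, hBarc⟩, hmemB⟩ := rot hC2 hsC
      have hB0s : hB0 = s := by
        rw [Option.mem_def] at hB0m
        have : some s = some hB0 := by simpa using hB0m
        injection this with h; exact h.symm
      have hB0s' : s = hB0 := hB0s.symm
      subst hB0s'
      have hBne : B ≠ [] := by
        intro h; subst h; simp at hlenB
      have heB' : (s :: B).getLast? = some e := heB
      have heZ : e ∉ Z := by
        intro heZ
        have hBlast : B.getLast? = some e := by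
          rw [getLast?_cons_ne hBne] at heB'; exact heB'
        have hallB : ∀ b ∈ B, b ∈ Z := by
          refine allZ hWZ hcover hnoarc B hchB.tail (nodup_cons.mp hndB).1 ?_
          intro e' he'
          rw [Option.mem_def, hBlast] at he'
          injection he' with he'
          exact he' ▸ heZ
        obtain ⟨a1, ha1⟩ := hQlast Q1 hQ1ne
        obtain ⟨a2, ha2⟩ := hQlast Q2 hQ2ne
        have hmem1 : a1 ∈ s :: B := (hmemB a1).mpr (hQ1l a1 ha1)
        have hmem2 : a2 ∈ s :: B := (hmemB a2).mpr (hQ2l a2 ha2)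
        have ha1s : a1 = s := by
          rcases mem_cons.mp hmem1 with h | h
          · exact h
          · exact absurd (hallB a1 h) (hLL1 a1 ha1)
        have ha2s : a2 = s := by
          rcases mem_cons.mp hmem2 with h | h
          · exact h
          · exact absurd (hallB a2 h) (hLL2 a2 ha2)
        exact hQd12 s (mem_of_mem_getLast? (ha1s ▸ ha1)) (mem_of_mem_getLast? (ha2s ▸ ha2))
      have hsne : s ≠ e := head_ne_last_of_nodup hndB hlenB rfl heB'
      -- the new cycle
      have hC'ch2 : (dropZ Z (s :: B)).Chain' (Dtwo D W Z s) := by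
        refine (core hWZ hsZ hcover hnoarc (s :: B).length (s :: B) le_rfl hchB hndB).1 ?_
        intro a ha
        have : s = a := by simpa using ha
        exact this ▸ hsZ
      have hC'h : (dropZ Z (s :: B)).head? = some s := head?_dropZ rfl hsZ
      have hC'l : (dropZ Z (s :: B)).getLast? = some e := getLast?_dropZ heB' heZ
      have hsC' : s ∈ dropZ Z (s :: B) := mem_dropZ.mpr ⟨mem_cons_self, hsZ⟩
      have heC' : e ∈ dropZ Z (s :: B) := mem_dropZ.mpr ⟨mem_of_mem_getLast? heB', heZ⟩
      have hC'noZ : ∀ v ∈ dropZ Z (s :: B), v ∉ Z := fun v hv => (mem_dropZ.mp hv).2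
      have hCmem : ∀ a, a ∈ C → a ∉ Z → a ∈ dropZ Z (s :: B) :=
        fun a haC haZ => mem_dropZ.mpr ⟨(hmemB a).mpr haC, haZ⟩
      refine ⟨dropZ Z (s :: B), dropZ Z Q1, dropZ Z Q2, dropZ Z Q3,
        ⟨two_le_length_of_mem hsC' heC' hsne,
          (dropZ_sublist _).nodup hndB,
          conv _ hC'ch2 hC'noZ,
          e, hC'l, s, hC'h, D2toD1 hcover hBarc heZ hsZ⟩,
        ⟨hL1ne, hL1ch, hL1nd⟩, ⟨hL2ne, hL2ch, hL2nd⟩, ⟨hL3ne, hL3ch, hL3nd⟩,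
        hL1h, hL2h, hL3h, ?_, ?_, ?_, hLd12, hLd13, hLd23⟩
      · intro a ha
        rw [Option.mem_def, hL1l] at ha
        exact hCmem a (hQ1l a ha) (hLL1 a ha)
      · intro a ha
        rw [Option.mem_def, hL2l] at ha
        exact hCmem a (hQ2l a ha) (hLL2 a ha)
      · intro a ha
        rw [Option.mem_def, hL3l] at ha
        exact hCmem a (hQ3l a ha) (hLL3 a ha)
    · -- C avoids Z : keep C as it is
      push_neg at hCZ
      have hCnoZ : ∀ v ∈ C, v ∉ Z := hCZ
      refine ⟨C, dropZ Z Q1, dropZ Z Q2, dropZ Z Q3,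
        ⟨hClen, hCnd, conv _ hCch2 hCnoZ,
          eC, heC, hC0, hC0m,
          D2toD1 hcover (Or.inl hCarc) (hCnoZ eC (mem_of_mem_getLast? heC))
            (hCnoZ hC0 (mem_of_mem_head? hC0m))⟩,
        ⟨hL1ne, hL1ch, hL1nd⟩, ⟨hL2ne, hL2ch, hL2nd⟩, ⟨hL3ne, hL3ch, hL3nd⟩,
        hL1h, hL2h, hL3h, ?_, ?_, ?_, hLd12, hLd13, hLd23⟩
      · intro a ha
        rw [Option.mem_def, hL1l] at ha
        exact hQ1l a ha
      · intro a ha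
        rw [Option.mem_def, hL2l] at ha
        exact hQ2l a ha
      · intro a ha
        rw [Option.mem_def, hL3l] at ha
        exact hQ3l a ha
  · -- backward direction
    rintro ⟨C, P1, P2, P3, hT⟩
    obtain ⟨hC, hP1, hP2, hP3, hh1, hh2, hh3, hl1, hl2, hl3, hd12, hd13, hd23⟩ := hT
    obtain ⟨hClen, hCnd, hCch, eC, heC, hC0, hC0m, hCarc⟩ := hC
    have hCch' : C.Chain' (Done D W Z s) := hCch
    have hCW : ∀ v ∈ C, v ∈ W ∪ {s} := verts_d1 hsW C hCch' hClen
    have legW : ∀ (P : List V) (x : V), P.Chain' (Done D W Z s) → P.head? = some x →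
        x ∈ W ∪ {s} → ∀ v ∈ P, v ∈ W ∪ {s} := by
      intro P x hch hh hx v hv
      match P, hv with
      | [a], hv =>
        have hax : a = x := by simpa using hh
        have hva : v = a := by simpa using hv
        exact hva ▸ hax ▸ hx
      | a :: b :: t, hv =>
        exact verts_d1 hsW (a :: b :: t) hch (by simp [Nat.le_add_left]) v hv
    have hCne : C ≠ [] := by
      intro h; rw [h] at hClen; simp at hClen
    have heC' : C.getLast? = some eC := heC
    have hC0' : C.head? = some hC0 := hC0m
    -- fix the cycle
    have hcyc : ∃ C'', IsDicycle D C'' ∧ ∀ x ∈ C, x ∈ C'' := by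
      obtain ⟨L', c1, c2, c3, c4, c5, c6, c7⟩ :=
        lfix hWZ hsZ hcover hnoarc hstrong C.length C le_rfl hCch' hCnd hCW
      rcases hCarc with ⟨hDe, _, _⟩ | ⟨hes, hhW, z, hzZ, hDzh⟩
      · refine ⟨L', ⟨?_, c2, c1, eC, by rw [Option.mem_def, c4]; exact heC', hC0,
          by rw [Option.mem_def, c3]; exact hC0', hDe⟩, c5⟩
        have hne := head_ne_last_of_nodup hCnd hClen hC0' heC'
        exact two_le_length_of_mem (c5 hC0 (mem_of_mem_head? hC0m))
          (c5 eC (mem_of_mem_getLast? heC)) hne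
      · -- special closing arc : s = last of C
        have hgl : C.getLast hCne = eC := by
          have h1 := getLast?_eq_getLast (l := C) hCne
          rw [heC'] at h1
          injection h1 with h1
          exact h1.symm
        have hsd : s ∉ C.dropLast := by
          intro hsmem
          have hnd2 : (C.dropLast ++ [C.getLast hCne]).Nodup := by
            rw [dropLast_append_getLast hCne]; exact hCnd
          exact (nodup_append'.mp hnd2).2.2 hsmem (by simp [hgl, ← hes])
        have hL'C : L' = C := c7 hsd
        rw [hL'C] at c1
        obtain ⟨m, hm1, hm2, hm3, hm4, hm5⟩ := pathZ hWZ hsZ hcover hnoarc (hstrong s z) hzZ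
        refine ⟨C ++ m, ⟨?_, ?_, ?_, z, ?_, hC0, ?_, hDzh⟩, fun x hx => mem_append_left m hx⟩
        · rw [length_append]
          omega
        · rw [nodup_append']
          refine ⟨hCnd, (nodup_cons.mp hm4).2, ?_⟩
          intro x hx hxm
          exact WS_not_Z x (hCW x hx) (hm2 x hxm)
        · rw [chain'_append]
          refine ⟨c1, hm3.tail, ?_⟩
          intro a ha b hb
          rw [Option.mem_def, heC'] at ha
          injection ha with ha
          subst ha
          rw [hes]
          exact (chain'_cons'.mp hm3).1 b hb
        · rw [Option.mem_def, getLast?_append, hm5]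
          rfl
        · rw [Option.mem_def, head?_append, hC0']
          rfl
    obtain ⟨C'', hC''cyc, hCsub⟩ := hcyc
    -- fix the legs
    have legfix2 : ∀ (P : List V) (x : V), IsDipath (Done D W Z s) P → P.head? = some x →
        x ∈ W ∪ {s} →
        ∃ P', IsDipath D P' ∧ P'.head? = some x ∧ P'.getLast? = P.getLast? ∧
          (∀ v ∈ P', v ∈ P ∨ (v ∈ Z ∧ s ∈ P)) := by
      intro P x hP hh hxWS
      obtain ⟨hne, hch, hnd⟩ := hP
      have hPW := legW P x hch hh hxWS
      obtain ⟨L', c1, c2, c3, c4, c5, c6, c7⟩ :=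
        lfix hWZ hsZ hcover hnoarc hstrong P.length P le_rfl hch hnd hPW
      refine ⟨L', ⟨?_, c1, c2⟩, by rw [c3, hh], c4, ?_⟩
      · intro h
        rw [h] at c3
        rw [hh] at c3
        simp at c3
      · intro v hv
        rcases c6 v hv with h | ⟨h1, h2⟩
        · exact Or.inl h
        · exact Or.inr ⟨h1, (dropLast_sublist P).mem h2⟩
    obtain ⟨P'1, hP'1, hh'1, hg1, hsub1⟩ := legfix2 P1 x1 hP1 hh1 hx1WS
    obtain ⟨P'2, hP'2, hh'2, hg2, hsub2⟩ := legfix2 P2 x2 hP2 hh2 hx2WS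
    obtain ⟨P'3, hP'3, hh'3, hg3, hsub3⟩ := legfix2 P3 x3 hP3 hh3 hx3WS
    have hP1W := legW P1 x1 hP1.2.1 hh1 hx1WS
    have hP2W := legW P2 x2 hP2.2.1 hh2 hx2WS
    have hP3W := legW P3 x3 hP3.2.1 hh3 hx3WS
    have legdisj : ∀ (P Q P' Q' : List V), (∀ v ∈ P', v ∈ P ∨ (v ∈ Z ∧ s ∈ P)) →
        (∀ v ∈ Q', v ∈ Q ∨ (v ∈ Z ∧ s ∈ Q)) → (∀ v ∈ P, v ∈ W ∪ {s}) →
        (∀ v ∈ Q, v ∈ W ∪ {s}) → (∀ v ∈ P, v ∉ Q) → ∀ v ∈ P', v ∉ Q' := by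
      intro P Q P' Q' h1 h2 hPw hQw hd v hv hv'
      rcases h1 v hv with hp | ⟨hz, hsp⟩ <;> rcases h2 v hv' with hq | ⟨hz', hsq⟩
      · exact hd v hp hq
      · exact WS_not_Z v (hPw v hp) hz'
      · exact WS_not_Z v (hQw v hq) hz
      · exact hd s hsp hsq
    refine ⟨C'', P'1, P'2, P'3, hC''cyc, hP'1, hP'2, hP'3, hh'1, hh'2, hh'3,
      ?_, ?_, ?_,
      legdisj P1 P2 P'1 P'2 hsub1 hsub2 hP1W hP2W hd12,
      legdisj P1 P3 P'1 P'3 hsub1 hsub3 hP1W hP3W hd13,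
      legdisj P2 P3 P'2 P'3 hsub2 hsub3 hP2W hP3W hd23⟩
    · intro a ha
      rw [Option.mem_def, hg1] at ha
      exact hCsub a (hl1 a ha)
    · intro a ha
      rw [Option.mem_def, hg2] at ha
      exact hCsub a (hl2 a ha)
    · intro a ha
      rw [Option.mem_def, hg3] at ha
      exact hCsub a (hl3 a ha)
end

section
/- Let D be a digraph and let P and Q be two disjoint dipaths from {s1, s2} to {t1, t2}. Suppose there is a loose crossing with respect to P and Q, i.e., arcs uv and u'v' of D with u on P strictly before v' on P, u' on Q strictly before v on Q, and not both uv' ∈ A(P) and u'v ∈ A(Q). Then D contains an ({s1, s2}, {t1, t2})-shunt. -/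
open List

variable {V : Type*}

/-- An `({s1,s2},{t1,t2})`-shunt: dipaths `P`, `Q`, `R` with `R` of length at least 2,
`s(R)` on `P`, `t(R)` on `Q`, with `P`, `Q` and the interior of `R` pairwise disjoint,
`{s(P),s(Q)} = {s1,s2}` and `{t(P),t(Q)} = {t1,t2}`. -/
def IsShunt (D : V → V → Prop) (s1 s2 t1 t2 : V) : Prop :=
  ∃ P Q R : List V,
    IsDipath D P ∧ IsDipath D Q ∧ IsDipath D R ∧ 3 ≤ R.length ∧
    (∀ z, z ∈ P → z ∉ Q) ∧
    (∀ a ∈ R.head?, a ∈ P) ∧ (∀ a ∈ R.getLast?, a ∈ Q) ∧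
    (∀ z ∈ interiorL R, z ∉ P ∧ z ∉ Q) ∧
    ((P.head? = some s1 ∧ Q.head? = some s2) ∨
      (P.head? = some s2 ∧ Q.head? = some s1)) ∧
    ((P.getLast? = some t1 ∧ Q.getLast? = some t2) ∨
      (P.getLast? = some t2 ∧ Q.getLast? = some t1))

lemma head?_take_succ (l : List V) (i : ℕ) : (l.take (i+1)).head? = l.head? := by
  simp [head?_take]

lemma getLast?_take_succ {l : List V} {i : ℕ} (h : i < l.length) :
    (l.take (i+1)).getLast? = l[i]? := by
  rw [getLast?_eq_getElem?, length_take]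
  have h1 : min (i+1) l.length - 1 = i := by omega
  rw [h1, getElem?_take_of_lt (Nat.lt_succ_self i)]

lemma head?_drop' (l : List V) (j : ℕ) : (l.drop j).head? = l[j]? := by
  simp [head?_drop]

lemma getLast?_drop' {l : List V} {j : ℕ} (h : j < l.length) :
    (l.drop j).getLast? = l.getLast? := by
  rw [getLast?_drop, if_neg (by omega)]

lemma shunt_aux (D : V → V → Prop) (s1 s2 t1 t2 : V) (P Q : List V)
    (hP : IsDipath D P) (hQ : IsDipath D Q)
    (hdisj : ∀ z, z ∈ P → z ∉ Q)
    (hs : (P.head? = some s1 ∧ Q.head? = some s2) ∨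
      (P.head? = some s2 ∧ Q.head? = some s1))
    (ht : (P.getLast? = some t1 ∧ Q.getLast? = some t2) ∨
      (P.getLast? = some t2 ∧ Q.getLast? = some t1))
    (u v u' v' : V) (huv : D u v) (hu'v' : D u' v')
    (i j i' j' : ℕ) (hij : i + 2 ≤ j)
    (hPi : P[i]? = some u) (hPj : P[j]? = some v')
    (hij' : i' < j') (hQi : Q[i']? = some u') (hQj : Q[j']? = some v) :
    IsShunt D s1 s2 t1 t2 := by
  obtain ⟨hiP, -⟩ := List.getElem?_eq_some_iff.mp hPi
  obtain ⟨hjP, -⟩ := List.getElem?_eq_some_iff.mp hPj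
  obtain ⟨hi'Q, -⟩ := List.getElem?_eq_some_iff.mp hQi
  obtain ⟨hj'Q, -⟩ := List.getElem?_eq_some_iff.mp hQj
  set P₁ := P.take (i+1) with hP₁
  set P₂ := Q.drop j' with hP₂
  set Q₁ := Q.take (i'+1) with hQ₁
  set Q₂ := P.drop j with hQ₂
  set R := (P.take (j+1)).drop i with hR
  -- endpoint computations
  have hP1last : P₁.getLast? = some u := by rw [hP₁, getLast?_take_succ hiP]; exact hPi
  have hP2head : P₂.head? = some v := by rw [hP₂, head?_drop']; exact hQj
  have hQ1last : Q₁.getLast? = some u' := by rw [hQ₁, getLast?_take_succ hi'Q]; exact hQi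
  have hQ2head : Q₂.head? = some v' := by rw [hQ₂, head?_drop']; exact hPj
  have hP1head : P₁.head? = P.head? := head?_take_succ P i
  have hQ1head : Q₁.head? = Q.head? := head?_take_succ Q i'
  have hP2last : P₂.getLast? = Q.getLast? := getLast?_drop' hj'Q
  have hQ2last : Q₂.getLast? = P.getLast? := getLast?_drop' hjP
  have hRlen : R.length = j + 1 - i := by
    rw [hR, length_drop, length_take]; omega
  have hRhead : R.head? = some u := by
    rw [hR, head?_drop', getElem?_take_of_lt (by omega)]; exact hPi
  have hRlast : R.getLast? = some v' := by
    rw [getLast?_eq_getElem?, hRlen, hR, getElem?_drop]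
    have h1 : i + (j + 1 - i - 1) = j := by omega
    rw [h1, getElem?_take_of_lt (Nat.lt_succ_self j)]; exact hPj
  have hint : interiorL R = (P.drop (i+1)).take (j-i-1) := by
    rw [hR, interiorL, tail_drop, drop_take, Nat.succ_sub_succ, dropLast_eq_take,
      take_take, length_take, length_drop]
    congr 1
    omega
  have hdropj : P.drop j = (P.drop (i+1)).drop (j-i-1) := by
    rw [drop_drop]
    congr 1
    omega
  -- memberships
  have huP1 : u ∈ P₁ := mem_of_getElem? (by rw [hP₁, getElem?_take_of_lt (Nat.lt_succ_self i)]; exact hPi)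
  have hv'Q2 : v' ∈ Q₂ := mem_of_getElem? (show Q₂[0]? = some v' by rw [hQ₂, getElem?_drop]; simpa using hPj)
  refine ⟨P₁ ++ P₂, Q₁ ++ Q₂, R, ?_, ?_, ?_, ?_, ?_, ?_, ?_, ?_, ?_, ?_⟩
  · refine ⟨?_, ?_, ?_⟩
    · intro h
      have := congrArg List.length h
      rw [length_append, hP₁, length_take, length_nil] at this
      omega
    · refine isChain_append.mpr ⟨hP.2.1.take _, hQ.2.1.drop _, ?_⟩
      intro x hx y hy
      rw [hP1last] at hx; rw [hP2head] at hy
      simp only [Option.mem_some_iff] at hx hy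
      subst hx; subst hy; exact huv
    · exact nodup_append.mpr ⟨hP.2.2.sublist (take_sublist _ _),
        hQ.2.2.sublist (drop_sublist _ _),
        fun a ha b ha' hab => by subst hab; exact hdisj a (mem_of_mem_take ha) (mem_of_mem_drop ha')⟩
  · refine ⟨?_, ?_, ?_⟩
    · intro h
      have := congrArg List.length h
      rw [length_append, hQ₁, length_take, length_nil] at this
      omega
    · refine isChain_append.mpr ⟨hQ.2.1.take _, hP.2.1.drop _, ?_⟩
      intro x hx y hy
      rw [hQ1last] at hx; rw [hQ2head] at hy
      simp only [Option.mem_some_iff] at hx hy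
      subst hx; subst hy; exact hu'v'
    · exact nodup_append.mpr ⟨hQ.2.2.sublist (take_sublist _ _),
        hP.2.2.sublist (drop_sublist _ _),
        fun a ha b ha' hab => by subst hab; exact hdisj a (mem_of_mem_drop ha') (mem_of_mem_take ha)⟩
  · refine ⟨?_, (hP.2.1.take _).drop _, List.Nodup.sublist
      ((drop_sublist _ _).trans (take_sublist _ _)) hP.2.2⟩
    intro h
    have := congrArg List.length h
    rw [hRlen] at this
    simp at this
    omega
  · omega
  · -- disjointness of the two new paths
    intro z hz hz'
    rcases mem_append.mp hz with h1 | h1 <;> rcases mem_append.mp hz' with h2 | h2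
    · exact hdisj z (mem_of_mem_take h1) (mem_of_mem_take h2)
    · exact disjoint_take_drop hP.2.2 (by omega : i + 1 ≤ j) h1 h2
    · exact disjoint_take_drop hQ.2.2 (by omega : i' + 1 ≤ j') h2 h1
    · exact hdisj z (mem_of_mem_drop h2) (mem_of_mem_drop h1)
  · intro a ha
    rw [hRhead] at ha
    simp only [Option.mem_some_iff] at ha
    subst ha
    exact mem_append_left _ huP1
  · intro a ha
    rw [hRlast] at ha
    simp only [Option.mem_some_iff] at ha
    subst ha
    exact mem_append_right _ hv'Q2
  · intro z hz
    rw [hint] at hz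
    have hz1 : z ∈ P.drop (i+1) := mem_of_mem_take hz
    have hzP : z ∈ P := mem_of_mem_drop hz1
    constructor
    · intro hzP'
      rcases mem_append.mp hzP' with h1 | h1
      · exact disjoint_take_drop hP.2.2 (le_refl (i+1)) h1 hz1
      · exact hdisj z hzP (mem_of_mem_drop h1)
    · intro hzQ'
      rcases mem_append.mp hzQ' with h1 | h1
      · exact hdisj z hzP (mem_of_mem_take h1)
      · rw [hQ₂, hdropj] at h1
        exact disjoint_take_drop (hP.2.2.sublist (drop_sublist _ _))
          (le_refl (j-i-1)) hz h1
  · rcases hs with ⟨h1, h2⟩ | ⟨h1, h2⟩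
    · exact Or.inl ⟨by rw [head?_append, hP1head, h1]; rfl,
        by rw [head?_append, hQ1head, h2]; rfl⟩
    · exact Or.inr ⟨by rw [head?_append, hP1head, h1]; rfl,
        by rw [head?_append, hQ1head, h2]; rfl⟩
  · rcases ht with ⟨h1, h2⟩ | ⟨h1, h2⟩
    · exact Or.inr ⟨by rw [getLast?_append, hP2last, h2]; rfl,
        by rw [getLast?_append, hQ2last, h1]; rfl⟩
    · exact Or.inl ⟨by rw [getLast?_append, hP2last, h2]; rfl,
        by rw [getLast?_append, hQ2last, h1]; rfl⟩

/-- a loose crossing yields a shunt. -/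
theorem shunt_of_loose_crossing (D : V → V → Prop) (s1 s2 t1 t2 : V)
    (P Q : List V) (hP : IsDipath D P) (hQ : IsDipath D Q)
    (hdisj : ∀ z, z ∈ P → z ∉ Q)
    (hs : (P.head? = some s1 ∧ Q.head? = some s2) ∨
      (P.head? = some s2 ∧ Q.head? = some s1))
    (ht : (P.getLast? = some t1 ∧ Q.getLast? = some t2) ∨
      (P.getLast? = some t2 ∧ Q.getLast? = some t1))
    (u v u' v' : V)
    (huv : D u v) (hu'v' : D u' v')
    (hPbefore : Before P u v') (hQbefore : Before Q u' v)
    (hloose : ¬ (ConsecIn P u v' ∧ ConsecIn Q u' v)) :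
    IsShunt D s1 s2 t1 t2 := by
  obtain ⟨i, j, hij, hPi, hPj⟩ := hPbefore
  obtain ⟨i', j', hij', hQi, hQj⟩ := hQbefore
  by_cases hc : ConsecIn P u v'
  · have hc2 : ¬ ConsecIn Q u' v := fun h => hloose ⟨hc, h⟩
    have hne : j' ≠ i' + 1 := fun h => hc2 ⟨i', hQi, h ▸ hQj⟩
    exact shunt_aux D s1 s2 t1 t2 Q P hQ hP
      (fun z hz hz' => hdisj z hz' hz)
      (by tauto) (by tauto)
      u' v' u v hu'v' huv i' j' i j (by omega) hQi hQj hij hPi hPj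
  · have hne : j ≠ i + 1 := fun h => hc ⟨i, hPi, h ▸ hPj⟩
    exact shunt_aux D s1 s2 t1 t2 P Q hP hQ hdisj hs ht
      u v u' v' huv hu'v' i j i' j' (by omega) hPi hPj hij' hQi hQj
end

section
/- Let D be a digraph and let P and Q be two disjoint dipaths from {s1, s2} to {t1, t2}. Suppose there is an arc uv with u ∈ V(P) and v ∈ V(Q), and a u-bypass B, i.e., a dipath internally disjoint from P and Q with initial vertex on P strictly before u and terminal vertex on P strictly after u. Then D contains an ({s1, s2}, {t1, t2})-shunt. -/
open List

variable {V : Type*}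

private lemma getElem_congr_idx' {l : List V} {i j : ℕ} (h : i = j) {hi : i < l.length} :
    l[i] = l[j]'(h ▸ hi) := by subst h; rfl

/-- an arc bypass yields a shunt. -/
theorem shunt_of_arc_bypass (D : V → V → Prop) (s1 s2 t1 t2 : V)
    (P Q : List V) (hP : IsDipath D P) (hQ : IsDipath D Q)
    (hdisj : ∀ z, z ∈ P → z ∉ Q)
    (hs : (P.head? = some s1 ∧ Q.head? = some s2) ∨
      (P.head? = some s2 ∧ Q.head? = some s1))
    (ht : (P.getLast? = some t1 ∧ Q.getLast? = some t2) ∨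
      (P.getLast? = some t2 ∧ Q.getLast? = some t1))
    (u v : V) (huv : D u v) (hu : u ∈ P) (hv : v ∈ Q)
    (B : List V) (hB : IsDipath D B)
    (hBhead : ∀ a ∈ B.head?, Before P a u)
    (hBlast : ∀ a ∈ B.getLast?, Before P u a)
    (hBint : ∀ z ∈ interiorL B, z ∉ P ∧ z ∉ Q) :
    IsShunt D s1 s2 t1 t2 := by
  obtain ⟨hPne, hPch, hPnd⟩ := hP
  obtain ⟨hBne, hBch, hBnd⟩ := hB
  obtain ⟨ia, iu, hiaiu, hga, hgu⟩ :=
    hBhead (B.head hBne) (by rw [List.head?_eq_head]; exact rfl)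
  obtain ⟨iu2, ib, hiuib, hgu2, hgb⟩ :=
    hBlast (B.getLast hBne) (by rw [List.getLast?_eq_getLast hBne]; exact rfl)
  rw [List.getElem?_eq_some_iff] at hga hgu hgu2 hgb
  obtain ⟨hia, hga⟩ := hga
  obtain ⟨hiu, hgu⟩ := hgu
  obtain ⟨hiu2, hgu2⟩ := hgu2
  obtain ⟨hib, hgb⟩ := hgb
  have hiueq : iu2 = iu := hPnd.getElem_inj_iff.mp (hgu2.trans hgu.symm)
  rw [hiueq] at hiuib
  clear hgu2 hiueq hiu2
  -- chain of P as a getElem statement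
  have hPc : ∀ i (h : i + 1 < P.length), D (P[i]'(by omega)) (P[i+1]'h) := by
    intro i h
    have := List.isChain_iff_getElem.mp hPch i (by omega)
    simpa using this
  -- decomposition of membership in B
  have hBmem : ∀ x ∈ B, x = P[ia] ∨ x = P[ib] ∨ (x ∉ P ∧ x ∉ Q) := by
    intro x hx
    rw [← List.cons_head_tail hBne, List.mem_cons] at hx
    rcases hx with hx | hx
    · left; rw [hga]; exact hx
    · have htne : B.tail ≠ [] := List.ne_nil_of_mem hx
      rw [← List.dropLast_append_getLast htne, List.mem_append, List.mem_singleton] at hx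
      rcases hx with hx | hx
      · right; right; exact hBint x hx
      · right; left; rw [hgb, ← List.getLast_tail htne]; exact hx
  -- membership characterizations of the pieces
  have hmemP1 : ∀ x ∈ P.take ia, ∃ i, ∃ h : i < P.length, i < ia ∧ P[i] = x := by
    intro x hx
    obtain ⟨j, hj, hje⟩ := List.mem_iff_getElem.mp hx
    have hj1 : j < ia := by simp [List.length_take] at hj; omega
    have hj2 : j < P.length := by simp [List.length_take] at hj; omega
    exact ⟨j, hj2, hj1, by rw [← hje, List.getElem_take]⟩
  have hmemP3 : ∀ x ∈ P.drop (ib + 1), ∃ i, ∃ h : i < P.length, ib + 1 ≤ i ∧ P[i] = x := by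
    intro x hx
    obtain ⟨j, hj, hje⟩ := List.mem_iff_getElem.mp hx
    have hj2 : ib + 1 + j < P.length := by simp [List.length_drop] at hj; omega
    refine ⟨ib + 1 + j, hj2, by omega, ?_⟩
    rw [← hje, List.getElem_drop]
  have hRmlen : ((P.drop ia).take (iu + 1 - ia)).length = iu + 1 - ia := by
    simp [List.length_take, List.length_drop]; omega
  have hRmget : ∀ k (h : k < ((P.drop ia).take (iu + 1 - ia)).length),
      ((P.drop ia).take (iu + 1 - ia))[k] = P[ia + k]'(by rw [hRmlen] at h; omega) := by
    intro k h
    rw [List.getElem_take, List.getElem_drop]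
  have hmemRm : ∀ x ∈ (P.drop ia).take (iu + 1 - ia),
      ∃ i, ∃ h : i < P.length, ia ≤ i ∧ i ≤ iu ∧ P[i] = x := by
    intro x hx
    obtain ⟨j, hj, hje⟩ := List.mem_iff_getElem.mp hx
    have hj1 : j < iu + 1 - ia := by rw [hRmlen] at hj; omega
    refine ⟨ia + j, by omega, by omega, by omega, ?_⟩
    rw [← hje, hRmget j hj]
  have hRmne : (P.drop ia).take (iu + 1 - ia) ≠ [] := by
    intro h; rw [h] at hRmlen; simp at hRmlen; omega
  have hRmhead : ((P.drop ia).take (iu + 1 - ia)).head? = some P[ia] := by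
    rw [List.head?_eq_getElem?, List.getElem?_eq_getElem (by rw [hRmlen]; omega : 0 < _),
      hRmget 0 (by rw [hRmlen]; omega)]
    simp
  have hRmlast : ((P.drop ia).take (iu + 1 - ia)).getLast? = some u := by
    rw [List.getLast?_eq_getElem?,
      List.getElem?_eq_getElem (by rw [hRmlen]; omega : _ - 1 < _),
      hRmget _ (by rw [hRmlen]; omega), getElem_congr_idx' (by rw [hRmlen]; omega : ia + (((P.drop ia).take (iu + 1 - ia)).length - 1) = iu), hgu]
  have hRmsub : (P.drop ia).take (iu + 1 - ia) <+ P :=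
    (List.take_sublist _ _).trans (List.drop_sublist _ _)
  -- head and last of the rerouted path
  have hP'head : (P.take ia ++ (B ++ P.drop (ib + 1))).head? = P.head? := by
    rw [List.head?_append, List.head?_append, List.head?_eq_head hBne, ← hga,
      List.head?_eq_getElem? (l := P), List.getElem?_eq_getElem (by omega : 0 < P.length)]
    rcases Nat.eq_zero_or_pos ia with hz | hz
    · subst hz; simp
    · rw [List.head?_eq_getElem?,
        List.getElem?_eq_getElem (by simp [List.length_take]; omega : 0 < (P.take ia).length),
        List.getElem_take]
      simp
  have hlastP : P.getLast? = some (P[P.length - 1]'(by omega)) := by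
    rw [List.getLast?_eq_getElem?, List.getElem?_eq_getElem (by omega)]
  have hP'last : (P.take ia ++ (B ++ P.drop (ib + 1))).getLast? = P.getLast? := by
    rw [List.getLast?_append, List.getLast?_append, List.getLast?_eq_getLast hBne, ← hgb,
      hlastP]
    rcases Nat.lt_or_ge (ib + 1) P.length with hlt | hge
    · rw [List.getLast?_eq_getElem?,
        List.getElem?_eq_getElem (by simp [List.length_drop]; omega :
          (P.drop (ib + 1)).length - 1 < (P.drop (ib + 1)).length),
        List.getElem_drop,
        getElem_congr_idx' (by simp [List.length_drop]; omega :
          ib + 1 + ((P.drop (ib + 1)).length - 1) = P.length - 1)]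
      simp
    · rw [List.drop_eq_nil_of_le (by omega)]
      simp only [List.getLast?_nil, Option.none_or, Option.or_some, Option.or_some, Option.getD_none, Option.some_or]
      rw [getElem_congr_idx' (by omega : ib = P.length - 1)]
  refine ⟨P.take ia ++ (B ++ P.drop (ib + 1)), Q, (P.drop ia).take (iu + 1 - ia) ++ [v],
    ?_, hQ, ?_, ?_, ?_, ?_, ?_, ?_, ?_, ?_⟩
  · -- IsDipath P'
    refine ⟨by simp [hBne], ?_, ?_⟩
    · change List.IsChain D _; rw [List.isChain_append, List.isChain_append]
      refine ⟨hPch.take _, ⟨hBch, hPch.drop _, ?_⟩, ?_⟩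
      · intro x hx y hy
        rw [List.getLast?_eq_getLast hBne, Option.mem_def, Option.some_inj] at hx
        rw [List.head?_drop, Option.mem_def] at hy
        rcases Nat.lt_or_ge (ib + 1) P.length with hlt | hge
        · rw [List.getElem?_eq_getElem hlt, Option.some_inj] at hy
          rw [← hx, ← hy, ← hgb]
          exact hPc ib hlt
        · rw [List.getElem?_eq_none (by omega)] at hy; exact absurd hy (by simp)
      · intro x hx y hy
        rw [List.getLast?_take] at hx
        rcases Nat.eq_zero_or_pos ia with h0 | h0
        · rw [if_pos h0] at hx; exact absurd hx (by simp)
        · rw [if_neg (by omega), List.getElem?_eq_getElem (by omega : ia - 1 < P.length)] at hx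
          simp only [Option.or_some, Option.some_or, Option.mem_def, Option.some_inj] at hx
          rw [List.head?_append, List.head?_eq_head hBne] at hy
          simp only [Option.or_some, Option.some_or, Option.mem_def, Option.some_inj] at hy
          rw [← hx, ← hy, ← hga, getElem_congr_idx' (by omega : ia = ia - 1 + 1)]
          exact hPc (ia - 1) (by omega)
    · rw [List.nodup_append', List.nodup_append']
      refine ⟨(List.take_sublist _ _).nodup hPnd,
        ⟨hBnd, (List.drop_sublist _ _).nodup hPnd, ?_⟩, ?_⟩
      · intro x hxB hxP3
        obtain ⟨i, hi, hile, hie⟩ := hmemP3 x hxP3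
        rcases hBmem x hxB with h | h | h
        · have : i = ia := hPnd.getElem_inj_iff.mp (by rw [hie, h])
          omega
        · have : i = ib := hPnd.getElem_inj_iff.mp (by rw [hie, h])
          omega
        · exact h.1 (hie ▸ List.getElem_mem hi)
      · intro x hxP1 hx
        obtain ⟨i, hi, hilt, hie⟩ := hmemP1 x hxP1
        rw [List.mem_append] at hx
        rcases hx with hxB | hxP3
        · rcases hBmem x hxB with h | h | h
          · have : i = ia := hPnd.getElem_inj_iff.mp (by rw [hie, h])
            omega
          · have : i = ib := hPnd.getElem_inj_iff.mp (by rw [hie, h])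
            omega
          · exact h.1 (hie ▸ List.getElem_mem hi)
        · obtain ⟨j, hj, hjle, hje⟩ := hmemP3 x hxP3
          have : i = j := hPnd.getElem_inj_iff.mp (by rw [hie, hje])
          omega
  · -- IsDipath R
    refine ⟨by simp, ?_, ?_⟩
    · change List.IsChain D _; rw [List.isChain_append]
      refine ⟨(hPch.drop _).take _, List.isChain_singleton _, ?_⟩
      intro x hx y hy
      rw [hRmlast, Option.mem_def, Option.some_inj] at hx
      simp only [List.head?_cons, Option.mem_def, Option.some_inj] at hy
      rw [← hx, ← hy]; exact huv
    · rw [List.nodup_append']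
      refine ⟨hRmsub.nodup hPnd, List.nodup_singleton _, ?_⟩
      intro x hxRm hxv
      rw [List.mem_singleton] at hxv
      exact hdisj x (hRmsub.mem hxRm) (hxv ▸ hv)
  · -- 3 ≤ R.length
    rw [List.length_append, hRmlen]
    simp; omega
  · -- disjointness of P' and Q
    intro z hz hzQ
    rw [List.mem_append, List.mem_append] at hz
    rcases hz with hz | hz | hz
    · obtain ⟨i, hi, _, hie⟩ := hmemP1 z hz
      exact hdisj z (hie ▸ List.getElem_mem hi) hzQ
    · rcases hBmem z hz with h | h | h
      · exact hdisj z (h ▸ List.getElem_mem hia) hzQ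
      · exact hdisj z (h ▸ List.getElem_mem hib) hzQ
      · exact h.2 hzQ
    · obtain ⟨i, hi, _, hie⟩ := hmemP3 z hz
      exact hdisj z (hie ▸ List.getElem_mem hi) hzQ
  · -- head of R is on P'
    intro x hx
    rw [List.head?_append, hRmhead] at hx
    simp only [Option.or_some, Option.some_or, Option.mem_def, Option.some_inj] at hx
    have hmem : P[ia] ∈ B := by rw [hga]; exact List.head_mem hBne
    rw [← hx]
    simp [List.mem_append, hmem]
  · -- last of R is on Q
    intro x hx
    rw [List.getLast?_append] at hx
    simp only [List.getLast?_singleton, Option.or_some, Option.some_or, Option.mem_def, Option.some_inj] at hx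
    rw [← hx]; exact hv
  · -- interior of R avoids P' and Q
    intro z hz
    have hint : interiorL ((P.drop ia).take (iu + 1 - ia) ++ [v]) =
        ((P.drop ia).take (iu + 1 - ia)).tail := by
      unfold interiorL
      rw [List.tail_append_of_ne_nil hRmne, List.dropLast_concat]
    rw [hint] at hz
    -- index of z
    obtain ⟨i, hi, hgt, hle, hie⟩ : ∃ i, ∃ h : i < P.length, ia < i ∧ i ≤ iu ∧ P[i] = z := by
      rw [← List.drop_one] at hz
      obtain ⟨j, hj, hje⟩ := List.mem_iff_getElem.mp hz
      have hj1 : 1 + j < ((P.drop ia).take (iu + 1 - ia)).length := by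
        simp [List.length_drop] at hj; omega
      have := hRmget (1 + j) hj1
      rw [List.getElem_drop] at hje
      refine ⟨ia + (1 + j), by rw [hRmlen] at hj1; omega, by omega, by rw [hRmlen] at hj1; omega, ?_⟩
      rw [← hje, ← this]
    constructor
    · -- z ∉ P'
      rw [List.mem_append, List.mem_append]
      push_neg
      refine ⟨?_, ?_, ?_⟩
      · intro hmem
        obtain ⟨j, hj, hjlt, hje⟩ := hmemP1 z hmem
        have : j = i := hPnd.getElem_inj_iff.mp (by rw [hje, hie])
        omega
      · intro hmem
        rcases hBmem z hmem with h | h | h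
        · have : i = ia := hPnd.getElem_inj_iff.mp (by rw [hie, h])
          omega
        · have : i = ib := hPnd.getElem_inj_iff.mp (by rw [hie, h])
          omega
        · exact h.1 (hie ▸ List.getElem_mem hi)
      · intro hmem
        obtain ⟨j, hj, hjle, hje⟩ := hmemP3 z hmem
        have : j = i := hPnd.getElem_inj_iff.mp (by rw [hje, hie])
        omega
    · exact hdisj z (hie ▸ List.getElem_mem hi)
  · rw [hP'head]; exact hs
  · rw [hP'last]; exact ht
end
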